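/- arXiv:1704.02909 — 4 statements merged into one kernel-verified Lean document; each statement's English description precedes it below -/
import Mathlib

section
/- Let γ ∈ SL(2,ℝ) act on ℝ ∪ {∞} by the Möbius transformation γ(x) = (ax+b)/(cx+d), and let I, J ⊂ ℝ be compact intervals with γ(I) = J. Then for all x, y ∈ I: e^{−|α(γ,I)|}·|J|/|I| ≤ γ'(x) ≤ e^{|α(γ,I)|}·|J|/|I|, and γ'(x)/γ'(y) ≤ exp(2 e^{|α(γ,I)|} · |x − y|/|I|). -/
open Set Real

noncomputable section

abbrev SL2 := Matrix.SpecialLinearGroup (Fin 2) ℝ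

/-- The Möbius transformation of `ℝ` associated to `g ∈ SL(2,ℝ)` (junk value at the pole). -/
def mobius (g : SL2) (x : ℝ) : ℝ :=
  (g 0 0 * x + g 0 1) / (g 1 0 * x + g 1 1)

/-- The derivative `γ'(x) = (cx+d)⁻²` of the Möbius transformation. -/
def mobiusDeriv (g : SL2) (x : ℝ) : ℝ :=
  ((g 1 0 * x + g 1 1) ^ 2)⁻¹

/-- The pole `γ⁻¹(∞) = -d/c` of `γ = [[a,b],[c,d]]`. -/
def mobiusPole (g : SL2) : ℝ := -(g 1 1) / (g 1 0)

/-- The distortion factor `α(γ, [x₀,x₁]) = log((γ⁻¹(∞) − x₁)/(γ⁻¹(∞) − x₀))`,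
with the convention `α = 0` when `γ⁻¹(∞) = ∞` (i.e. `c = 0`). -/
def alphaDist (g : SL2) (x₀ x₁ : ℝ) : ℝ :=
  if g 1 0 = 0 then 0 else Real.log ((mobiusPole g - x₁) / (mobiusPole g - x₀))

/-- **Derivative bounds via the distortion factor.**
If `γ ∈ SL(2,ℝ)` maps the compact interval `I = [x₀,x₁]` (containing no pole of `γ`)
onto `J = [y₀,y₁] ⊂ ℝ`, then for all `x, y ∈ I`:
`e^{-|α(γ,I)|}·|J|/|I| ≤ γ'(x) ≤ e^{|α(γ,I)|}·|J|/|I|` and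
`γ'(x)/γ'(y) ≤ exp(2 e^{|α(γ,I)|}·|x−y|/|I|)`. -/
theorem mobius_derivative_distortion (g : SL2) (x₀ x₁ y₀ y₁ : ℝ) (hI : x₀ < x₁)
    (hpole : ∀ x ∈ Icc x₀ x₁, g 1 0 * x + g 1 1 ≠ 0)
    (him : mobius g '' Icc x₀ x₁ = Icc y₀ y₁) :
    ∀ x ∈ Icc x₀ x₁, ∀ y ∈ Icc x₀ x₁,
      Real.exp (-|alphaDist g x₀ x₁|) * ((y₁ - y₀) / (x₁ - x₀)) ≤ mobiusDeriv g x ∧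
      mobiusDeriv g x ≤ Real.exp |alphaDist g x₀ x₁| * ((y₁ - y₀) / (x₁ - x₀)) ∧
      mobiusDeriv g x / mobiusDeriv g y ≤
        Real.exp (2 * Real.exp |alphaDist g x₀ x₁| * |x - y| / (x₁ - x₀)) := by
  set a := g 0 0 with ha
  set b := g 0 1 with hb
  set c := g 1 0 with hc
  set d := g 1 1 with hd
  have hx10 : x₁ - x₀ ≠ 0 := sub_ne_zero.mpr hI.ne'
  have hdet : a * d - b * c = 1 := by
    have h2 := g.2
    rw [Matrix.det_fin_two] at h2
    linarith [h2]
  -- sign lemma: the denominator has constant sign on the interval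
  have hsign : ∀ x ∈ Icc x₀ x₁, ∀ y ∈ Icc x₀ x₁, 0 < (c * x + d) * (c * y + d) := by
    intro x hx y hy
    by_contra hle
    push_neg at hle
    have hcont : ContinuousOn (fun t => c * t + d) (uIcc x y) :=
      ((continuous_const.mul continuous_id).add continuous_const).continuousOn
    have h0 : (0:ℝ) ∈ uIcc (c * x + d) (c * y + d) := by
      rcases mul_nonpos_iff.mp hle with ⟨h1, h2⟩ | ⟨h1, h2⟩
      · exact mem_uIcc.mpr (Or.inr ⟨h2, h1⟩)
      · exact mem_uIcc.mpr (Or.inl ⟨h1, h2⟩)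
    obtain ⟨z, hz, hz0⟩ := intermediate_value_uIcc hcont h0
    exact hpole z (uIcc_subset_Icc hx hy hz) hz0
  -- difference formula
  have hdiff : ∀ x ∈ Icc x₀ x₁, ∀ y ∈ Icc x₀ x₁,
      mobius g x - mobius g y = (x - y) / ((c * x + d) * (c * y + d)) := by
    intro x hx y hy
    have h1 := hpole x hx
    have h2 := hpole y hy
    unfold mobius
    rw [div_sub_div _ _ h1 h2]
    congr 1
    linear_combination (x - y) * hdet
  -- strict monotonicity
  have hmono : ∀ p ∈ Icc x₀ x₁, ∀ q ∈ Icc x₀ x₁, p < q → mobius g p < mobius g q := by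
    intro p hp q hq hpq
    have h1 := hdiff q hq p hp
    have h2 := hsign q hq p hp
    have : 0 < mobius g q - mobius g p := by
      rw [h1]; exact div_pos (by linarith) h2
    linarith
  have hcont : ContinuousOn (mobius g) (Icc x₀ x₁) := by
    apply ContinuousOn.div
    · exact ((continuous_const.mul continuous_id).add continuous_const).continuousOn
    · exact ((continuous_const.mul continuous_id).add continuous_const).continuousOn
    · exact hpole
  have hx₀ : x₀ ∈ Icc x₀ x₁ := ⟨le_refl _, hI.le⟩
  have hx₁ : x₁ ∈ Icc x₀ x₁ := ⟨hI.le, le_refl _⟩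
  have himg : mobius g '' Icc x₀ x₁ = Icc (mobius g x₀) (mobius g x₁) := by
    apply Subset.antisymm
    · rintro _ ⟨t, ht, rfl⟩
      constructor
      · rcases eq_or_lt_of_le ht.1 with h | h
        · rw [h]
        · exact (hmono x₀ hx₀ t ht h).le
      · rcases eq_or_lt_of_le ht.2 with h | h
        · rw [h]
        · exact (hmono t ht x₁ hx₁ h).le
    · exact intermediate_value_Icc hI.le hcont
  rw [him] at himg
  have hmm : mobius g x₀ < mobius g x₁ := hmono x₀ hx₀ x₁ hx₁ hI
  have hmem0 : mobius g x₀ ∈ Icc y₀ y₁ := by rw [himg]; exact ⟨le_refl _, hmm.le⟩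
  have hmem1 : mobius g x₁ ∈ Icc y₀ y₁ := by rw [himg]; exact ⟨hmm.le, le_refl _⟩
  have hy01 : y₀ ≤ y₁ := le_trans hmem0.1 hmem0.2
  have hy0 : y₀ = mobius g x₀ := by
    have h1 : y₀ ∈ Icc (mobius g x₀) (mobius g x₁) := himg ▸ ⟨le_refl _, hy01⟩
    exact le_antisymm hmem0.1 h1.1
  have hy1 : y₁ = mobius g x₁ := by
    have h1 : y₁ ∈ Icc (mobius g x₀) (mobius g x₁) := himg ▸ ⟨hy01, le_refl _⟩
    exact le_antisymm h1.2 hmem1.2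
  have hJ : y₁ - y₀ = (x₁ - x₀) / ((c * x₁ + d) * (c * x₀ + d)) := by
    rw [hy0, hy1]; exact hdiff x₁ hx₁ x₀ hx₀
  intro x hx y hy
  have hux := hpole x hx
  have huy := hpole y hy
  have hdx : mobiusDeriv g x = ((c * x + d) ^ 2)⁻¹ := rfl
  have hdy : mobiusDeriv g y = ((c * y + d) ^ 2)⁻¹ := rfl
  by_cases hc0 : c = 0
  · -- affine case: α = 0 and γ' is constant
    have hd0 : d ≠ 0 := by simpa [hc0] using hpole x₀ hx₀
    have hα : alphaDist g x₀ x₁ = 0 := by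
      unfold alphaDist; rw [if_pos]; rw [← hc]; exact hc0
    have hJ' : (y₁ - y₀) / (x₁ - x₀) = (d ^ 2)⁻¹ := by
      rw [hJ, hc0, zero_mul, zero_add, div_right_comm, div_self hx10]
      rw [one_div]
      congr 1
      ring
    rw [hα, hdx, hdy, hc0, hJ']
    simp only [abs_zero, neg_zero, Real.exp_zero, one_mul, zero_mul, zero_add]
    refine ⟨le_refl _, le_refl _, ?_⟩
    rw [div_self (inv_ne_zero (pow_ne_zero 2 hd0))]
    have h0 : (0:ℝ) ≤ 2 * 1 * |x - y| / (x₁ - x₀) :=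
      div_nonneg (by positivity) (by linarith)
    calc (1:ℝ) = Real.exp 0 := (Real.exp_zero).symm
    _ ≤ _ := Real.exp_le_exp.mpr h0
  · -- genuine Möbius case
    set u₀ := c * x₀ + d with hu₀
    set u₁ := c * x₁ + d with hu₁
    set m := min |u₀| |u₁| with hm
    set M := max |u₀| |u₁| with hM
    have hu₀0 : u₀ ≠ 0 := hpole x₀ hx₀
    have hu₁0 : u₁ ≠ 0 := hpole x₁ hx₁
    have hm0 : 0 < m := lt_min (abs_pos.mpr hu₀0) (abs_pos.mpr hu₁0)
    have hmM : m ≤ M := min_le_max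
    have hM0 : 0 < M := lt_of_lt_of_le hm0 hmM
    have hprod : u₀ * u₁ = m * M := by
      have h1 : 0 < u₀ * u₁ := hsign x₀ hx₀ x₁ hx₁
      rw [hm, hM, min_mul_max, ← abs_mul, abs_of_pos h1]
    -- value of exp |α|
    have hαval : Real.exp |alphaDist g x₀ x₁| = M / m := by
      have hp : ∀ t : ℝ, mobiusPole g - t = -(c * t + d) / c := by
        intro t
        unfold mobiusPole
        rw [← hc, ← hd]
        field_simp
        ring
      have hr : (mobiusPole g - x₁) / (mobiusPole g - x₀) = u₁ / u₀ := by
        rw [hp x₁, hp x₀, ← hu₀, ← hu₁]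
        rw [div_div_div_eq]
        rw [show -u₁ * c = u₁ * c * (-1) by ring, show c * -u₀ = u₀ * c * (-1) by ring,
          mul_div_mul_right _ _ (by norm_num : (-1:ℝ) ≠ 0),
          mul_div_mul_right _ _ hc0]
      have hα : alphaDist g x₀ x₁ = Real.log (u₁ / u₀) := by
        unfold alphaDist
        rw [if_neg (by rw [← hc]; exact hc0), hr]
      have hrpos : 0 < u₁ / u₀ := by
        have h1 : 0 < u₁ * u₀ := hsign x₁ hx₁ x₀ hx₀
        rcases mul_pos_iff.mp h1 with ⟨h2, h3⟩ | ⟨h2, h3⟩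
        · exact div_pos_iff.mpr (Or.inl ⟨h2, h3⟩)
        · exact div_pos_iff.mpr (Or.inr ⟨h2, h3⟩)
      have habs : u₁ / u₀ = |u₁| / |u₀| := by
        rw [← abs_div, abs_of_pos hrpos]
      rw [hα]
      rcases le_or_gt (|u₀|) (|u₁|) with h | h
      · have hr1 : 1 ≤ u₁ / u₀ := by
          rw [habs]; exact (one_le_div (abs_pos.mpr hu₀0)).mpr h
        rw [abs_of_nonneg (Real.log_nonneg hr1), Real.exp_log hrpos, habs, hM, hm,
          max_eq_right h, min_eq_left h]
      · have hr1 : u₁ / u₀ < 1 := by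
          rw [habs]; exact (div_lt_one (abs_pos.mpr hu₀0)).mpr h
        rw [abs_of_neg (Real.log_neg hrpos hr1), Real.exp_neg, Real.exp_log hrpos, habs, hM, hm,
          max_eq_left h.le, min_eq_right h.le]
        exact inv_div _ _
    -- |J|/|I|
    have hJ2 : (y₁ - y₀) / (x₁ - x₀) = (m * M)⁻¹ := by
      rw [hJ, div_right_comm, div_self hx10, one_div]
      congr 1
      rw [mul_comm, hprod]
    -- denominator lies between u₀ and u₁
    have hbetween : ∀ z ∈ Icc x₀ x₁, min u₀ u₁ ≤ c * z + d ∧ c * z + d ≤ max u₀ u₁ := by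
      intro z hz
      rcases le_total 0 c with hcs | hcs
      · constructor
        · refine le_trans (min_le_left _ _) ?_
          rw [hu₀]
          exact add_le_add_left (mul_le_mul_of_nonneg_left hz.1 hcs) d
        · refine le_trans ?_ (le_max_right _ _)
          rw [hu₁]
          exact add_le_add_left (mul_le_mul_of_nonneg_left hz.2 hcs) d
      · constructor
        · refine le_trans (min_le_right _ _) ?_
          rw [hu₁]
          exact add_le_add_left (mul_le_mul_of_nonpos_left hz.2 hcs) d
        · refine le_trans ?_ (le_max_left _ _)
          rw [hu₀]
          exact add_le_add_left (mul_le_mul_of_nonpos_left hz.1 hcs) d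
    -- absolute value bounds on the interval
    have habs_bound : ∀ z ∈ Icc x₀ x₁, m ≤ |c * z + d| ∧ |c * z + d| ≤ M := by
      intro z hz
      obtain ⟨hl, hr'⟩ := hbetween z hz
      rcases hu₀0.lt_or_gt with hneg | hpos
      · have h1neg : u₁ < 0 := by
          rcases mul_pos_iff.mp (hsign x₁ hx₁ x₀ hx₀) with ⟨h2, h3⟩ | ⟨h2, h3⟩ <;> linarith
        have hzneg : c * z + d < 0 := by
          rcases mul_pos_iff.mp (hsign z hz x₀ hx₀) with ⟨h2, h3⟩ | ⟨h2, h3⟩ <;> linarith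
        rw [abs_of_neg hzneg, hm, hM, abs_of_neg hneg, abs_of_neg h1neg, min_neg_neg,
          max_neg_neg]
        constructor <;> linarith
      · have h1pos : 0 < u₁ := by
          rcases mul_pos_iff.mp (hsign x₁ hx₁ x₀ hx₀) with ⟨h2, h3⟩ | ⟨h2, h3⟩ <;> linarith
        have hzpos : 0 < c * z + d := by
          rcases mul_pos_iff.mp (hsign z hz x₀ hx₀) with ⟨h2, h3⟩ | ⟨h2, h3⟩ <;> linarith
        rw [abs_of_pos hzpos, hm, hM, abs_of_pos hpos, abs_of_pos h1pos]
        exact ⟨hl, hr'⟩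
    obtain ⟨hmx, hMx⟩ := habs_bound x hx
    have hu2x : (0:ℝ) < (c * x + d) ^ 2 := by positivity
    have hu2y : (0:ℝ) < (c * y + d) ^ 2 := by positivity
    -- |c| (x₁ - x₀) = M - m
    have hcM : |c| * (x₁ - x₀) = M - m := by
      have h1 : |c| * (x₁ - x₀) = |u₁ - u₀| := by
        rw [← abs_of_pos (by linarith : (0:ℝ) < x₁ - x₀), ← abs_mul]
        congr 1
        rw [hu₀, hu₁]; ring
      rw [h1]
      rcases hu₀0.lt_or_gt with hneg | hpos
      · have h1neg : u₁ < 0 := by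
          rcases mul_pos_iff.mp (hsign x₁ hx₁ x₀ hx₀) with ⟨h2, h3⟩ | ⟨h2, h3⟩ <;> linarith
        rw [hM, hm, abs_of_neg hneg, abs_of_neg h1neg, min_neg_neg, max_neg_neg]
        rcases le_total u₀ u₁ with h | h
        · rw [abs_of_nonneg (by linarith), max_eq_right h, min_eq_left h]; ring
        · rw [abs_of_nonpos (by linarith), max_eq_left h, min_eq_right h]; ring
      · have h1pos : 0 < u₁ := by
          rcases mul_pos_iff.mp (hsign x₁ hx₁ x₀ hx₀) with ⟨h2, h3⟩ | ⟨h2, h3⟩ <;> linarith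
        rw [hM, hm, abs_of_pos hpos, abs_of_pos h1pos]
        rcases le_total u₀ u₁ with h | h
        · rw [abs_of_nonneg (by linarith), max_eq_right h, min_eq_left h]
        · rw [abs_of_nonpos (by linarith), max_eq_left h, min_eq_right h]; ring
    refine ⟨?_, ?_, ?_⟩
    · -- lower bound
      rw [hdx, Real.exp_neg, hαval, hJ2, ← mul_inv]
      have hMm : M / m * (m * M) = M ^ 2 := by field_simp
      rw [hMm]
      refine inv_anti₀ hu2x ?_
      calc (c * x + d) ^ 2 = |c * x + d| ^ 2 := (sq_abs _).symm
      _ ≤ M ^ 2 := pow_le_pow_left₀ (abs_nonneg _) hMx 2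
    · -- upper bound
      rw [hdx, hαval, hJ2]
      have hMm : M / m * (m * M)⁻¹ = (m ^ 2)⁻¹ := by
        field_simp [hm0.ne', hM0.ne']
      rw [hMm]
      refine inv_anti₀ (by positivity) ?_
      calc m ^ 2 ≤ |c * x + d| ^ 2 := pow_le_pow_left₀ hm0.le hmx 2
      _ = (c * x + d) ^ 2 := sq_abs _
    · -- distortion bound
      obtain ⟨hmy, hMy⟩ := habs_bound y hy
      set E := M / m * (|x - y| / (x₁ - x₀)) with hE
      have hE0 : 0 ≤ E :=
        mul_nonneg (div_nonneg hM0.le hm0.le) (div_nonneg (abs_nonneg _) (by linarith))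
      have h1 : |c * y + d| ≤ |c * x + d| + |c| * |x - y| := by
        have heq : c * y + d = (c * x + d) + c * (y - x) := by ring
        calc |c * y + d| = |(c * x + d) + c * (y - x)| := by rw [← heq]
        _ ≤ |c * x + d| + |c * (y - x)| := abs_add_le _ _
        _ = |c * x + d| + |c| * |x - y| := by rw [abs_mul, abs_sub_comm y x]
      have h2 : |c| * |x - y| ≤ m * E := by
        have hmE : m * E = M * |x - y| / (x₁ - x₀) := by
          rw [hE]; field_simp
        rw [hmE, le_div_iff₀ (by linarith : (0:ℝ) < x₁ - x₀)]
        have h5 : |c| * |x - y| * (x₁ - x₀) = (M - m) * |x - y| := by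
          linear_combination |x - y| * hcM
        rw [h5]
        have h6 := mul_le_mul_of_nonneg_right (by linarith : M - m ≤ M) (abs_nonneg (x - y))
        linarith
      have h2' : m * E ≤ |c * x + d| * E := mul_le_mul_of_nonneg_right hmx hE0
      have hkey : |c * y + d| ≤ |c * x + d| * (1 + E) := by
        rw [mul_one_add]
        linarith
      have h1E : 1 + E ≤ Real.exp E := by linarith [Real.add_one_le_exp E]
      have hsq : (c * y + d) ^ 2 ≤ (c * x + d) ^ 2 * Real.exp (2 * E) := by
        calc (c * y + d) ^ 2 = |c * y + d| ^ 2 := (sq_abs _).symm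
        _ ≤ (|c * x + d| * (1 + E)) ^ 2 := pow_le_pow_left₀ (abs_nonneg _) hkey 2
        _ = |c * x + d| ^ 2 * (1 + E) ^ 2 := by ring
        _ ≤ |c * x + d| ^ 2 * (Real.exp E) ^ 2 :=
            mul_le_mul_of_nonneg_left (pow_le_pow_left₀ (by linarith) h1E 2) (by positivity)
        _ = (c * x + d) ^ 2 * Real.exp (2 * E) := by
            rw [sq_abs, two_mul, Real.exp_add]; ring
      have hexpE : Real.exp (2 * Real.exp |alphaDist g x₀ x₁| * |x - y| / (x₁ - x₀))
          = Real.exp (2 * E) := by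
        congr 1
        rw [hαval, hE]; ring
      rw [hdx, hdy, hexpE]
      have hratio : ((c * x + d) ^ 2)⁻¹ / ((c * y + d) ^ 2)⁻¹
          = (c * y + d) ^ 2 / (c * x + d) ^ 2 := by
        rw [inv_div_inv]
      rw [hratio, div_le_iff₀ hu2x, mul_comm (Real.exp (2 * E)) ((c * x + d) ^ 2)]
      exact hsq

end
end

section
/- Let γ₁, γ₂ ∈ SL(2,ℝ) act on ℝ ∪ {∞} by Möbius transformations, and let I, J₁, J₂ ⊂ ℝ be compact intervals with γ_j(I) = J_j for j = 1, 2. Let L ⊂ ℝ be a bounded interval, write α_j := α(γ_j, I), and assume α₁ ≠ α₂. Then the set {x ∈ I : log(γ₁'(x)/γ₂'(x)) ∈ L} is contained in an interval of length at most e^{|α₁| + |α₂|} · |I| · |L| / |α₁ − α₂|. -/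
open Set Real

noncomputable section

lemma samesign_aux {f : ℝ → ℝ} {a b : ℝ} (hf : ContinuousOn f (Icc a b))
    (hne : ∀ x ∈ Icc a b, f x ≠ 0) {x : ℝ} (hx : x ∈ Icc a b) :
    0 < f a * f x := by
  have hax : a ≤ x := hx.1
  have ha : a ∈ Icc a b := ⟨le_refl a, le_trans hx.1 hx.2⟩
  have hsub : Icc a x ⊆ Icc a b := Icc_subset_Icc le_rfl hx.2
  rcases (hne a ha).lt_or_gt with h1 | h1 <;> rcases (hne x hx).lt_or_gt with h2 | h2
  · exact mul_pos_of_neg_of_neg h1 h2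
  · exfalso
    obtain ⟨z, hz, hz0⟩ := intermediate_value_Icc hax (hf.mono hsub) ⟨h1.le, h2.le⟩
    exact hne z (hsub hz) hz0
  · exfalso
    obtain ⟨z, hz, hz0⟩ := intermediate_value_Icc' hax (hf.mono hsub) ⟨h2.le, h1.le⟩
    exact hne z (hsub hz) hz0
  · exact mul_pos h1 h2

lemma linear_abs_bounds {c d a b : ℝ} (hab : a ≤ b)
    (hne : ∀ x ∈ Icc a b, c * x + d ≠ 0) {x : ℝ} (hx : x ∈ Icc a b) :
    min |c * a + d| |c * b + d| ≤ |c * x + d| ∧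
      |c * x + d| ≤ max |c * a + d| |c * b + d| := by
  have hcont : ContinuousOn (fun x => c * x + d) (Icc a b) := by fun_prop
  have hsx : 0 < (c * a + d) * (c * x + d) := samesign_aux hcont hne hx
  have hsb : 0 < (c * a + d) * (c * b + d) := samesign_aux hcont hne (right_mem_Icc.2 hab)
  have h1 : 0 ≤ x - a := by linarith [hx.1]
  have h2 : 0 ≤ b - x := by linarith [hx.2]
  have hbet : 0 ≤ ((c * x + d) - (c * a + d)) * ((c * b + d) - (c * x + d)) := by
    nlinarith [mul_nonneg (mul_nonneg (sq_nonneg c) h1) h2]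
  rcases (hne a (left_mem_Icc.2 hab)).lt_or_gt with hA | hA
  · have hX : c * x + d < 0 := by
      rcases mul_pos_iff.1 hsx with ⟨h, _⟩ | ⟨_, h⟩
      · linarith
      · exact h
    have hB : c * b + d < 0 := by
      rcases mul_pos_iff.1 hsb with ⟨h, _⟩ | ⟨_, h⟩
      · linarith
      · exact h
    rw [abs_of_neg hA, abs_of_neg hX, abs_of_neg hB]
    constructor
    · by_contra h
      push_neg at h
      rw [lt_min_iff] at h
      nlinarith [h.1, h.2, hbet]
    · by_contra h
      push_neg at h
      rw [max_lt_iff] at h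
      nlinarith [h.1, h.2, hbet]
  · have hX : 0 < c * x + d := by
      rcases mul_pos_iff.1 hsx with ⟨_, h⟩ | ⟨h, _⟩
      · exact h
      · linarith
    have hB : 0 < c * b + d := by
      rcases mul_pos_iff.1 hsb with ⟨_, h⟩ | ⟨h, _⟩
      · exact h
      · linarith
    rw [abs_of_pos hA, abs_of_pos hX, abs_of_pos hB]
    constructor
    · by_contra h
      push_neg at h
      rw [lt_min_iff] at h
      nlinarith [h.1, h.2, hbet]
    · by_contra h
      push_neg at h
      rw [max_lt_iff] at h
      nlinarith [h.1, h.2, hbet]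

lemma exp_abs_ratio {p q α : ℝ} (hp : 0 < p) (hq : 0 < q)
    (hα : α = Real.log q - Real.log p) :
    max p q ≤ Real.exp |α| * min p q := by
  have h1 : Real.exp α = q / p := by
    rw [hα, Real.exp_sub, Real.exp_log hq, Real.exp_log hp]
  have h2 : Real.exp (-α) = p / q := by
    rw [hα, neg_sub, Real.exp_sub, Real.exp_log hq, Real.exp_log hp]
  rcases le_total p q with h | h
  · rw [max_eq_right h, min_eq_left h]
    have he : Real.exp α ≤ Real.exp |α| := Real.exp_le_exp.2 (le_abs_self α)
    have hqe : q = Real.exp α * p := by rw [h1]; field_simp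
    rw [hqe]
    exact mul_le_mul_of_nonneg_right he hp.le
  · rw [max_eq_left h, min_eq_right h]
    have he : Real.exp (-α) ≤ Real.exp |α| := Real.exp_le_exp.2 (neg_le_abs α)
    have hpe : p = Real.exp (-α) * q := by rw [h2]; field_simp
    rw [hpe]
    exact mul_le_mul_of_nonneg_right he hq.le

lemma alphaDist_eq_log_sub (g : SL2) (x₀ x₁ : ℝ) (h01 : x₀ ≤ x₁)
    (hp : ∀ x ∈ Icc x₀ x₁, g 1 0 * x + g 1 1 ≠ 0) :
    alphaDist g x₀ x₁
      = Real.log (g 1 0 * x₁ + g 1 1) - Real.log (g 1 0 * x₀ + g 1 1) := by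
  by_cases hc : g 1 0 = 0
  · simp [alphaDist, hc]
  · have h0 := hp x₀ (left_mem_Icc.2 h01)
    have h1 := hp x₁ (right_mem_Icc.2 h01)
    rw [alphaDist, if_neg hc, mobiusPole]
    rw [show (-(g 1 1) / g 1 0 - x₁) / (-(g 1 1) / g 1 0 - x₀)
        = (g 1 0 * x₁ + g 1 1) / (g 1 0 * x₀ + g 1 1) by
      rw [div_eq_div_iff]
      · field_simp
        ring
      · intro h
        apply h0
        have : -(g 1 1) / g 1 0 = x₀ := by linarith
        field_simp at this
        linarith
      · exact h0]
    exact Real.log_div h1 h0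

/-- **Transformations with different distortion factors have transversal derivatives.**
If `γ₁, γ₂ ∈ SL(2,ℝ)` map the compact interval `I = [x₀,x₁]` (containing no poles) onto
compact intervals `J₁, J₂ ⊂ ℝ`, and `α₁ := α(γ₁,I) ≠ α₂ := α(γ₂,I)`, then for any bounded
interval `L = [l₀,l₁]` the set `{x ∈ I : log(γ₁'(x)/γ₂'(x)) ∈ L}` is contained in an
interval of length at most `e^{|α₁|+|α₂|}·|I|·|L| / |α₁ − α₂|`. -/
theorem mobius_distortion_discrepancy (g₁ g₂ : SL2) (x₀ x₁ : ℝ) (hI : x₀ < x₁)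
    (hpole₁ : ∀ x ∈ Icc x₀ x₁, g₁ 1 0 * x + g₁ 1 1 ≠ 0)
    (hpole₂ : ∀ x ∈ Icc x₀ x₁, g₂ 1 0 * x + g₂ 1 1 ≠ 0)
    (y₀ y₁ z₀ z₁ : ℝ)
    (him₁ : mobius g₁ '' Icc x₀ x₁ = Icc y₀ y₁)
    (him₂ : mobius g₂ '' Icc x₀ x₁ = Icc z₀ z₁)
    (l₀ l₁ : ℝ) (hL : l₀ ≤ l₁)
    (hα : alphaDist g₁ x₀ x₁ ≠ alphaDist g₂ x₀ x₁) :
    ∃ c d : ℝ,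
      d - c ≤ Real.exp (|alphaDist g₁ x₀ x₁| + |alphaDist g₂ x₀ x₁|) * (x₁ - x₀) * (l₁ - l₀) /
        |alphaDist g₁ x₀ x₁ - alphaDist g₂ x₀ x₁| ∧
      {x ∈ Icc x₀ x₁ | Real.log (mobiusDeriv g₁ x / mobiusDeriv g₂ x) ∈ Icc l₀ l₁} ⊆
        Icc c d := by
  have h01 : x₀ ≤ x₁ := hI.le
  set a1 := alphaDist g₁ x₀ x₁ with ha1def
  set a2 := alphaDist g₂ x₀ x₁ with ha2def
  set u1 : ℝ → ℝ := fun x => g₁ 1 0 * x + g₁ 1 1 with hu1def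
  set u2 : ℝ → ℝ := fun x => g₂ 1 0 * x + g₂ 1 1 with hu2def
  have hu1 : ∀ x ∈ Icc x₀ x₁, u1 x ≠ 0 := by simp only [hu1def]; exact hpole₁
  have hu2 : ∀ x ∈ Icc x₀ x₁, u2 x ≠ 0 := by simp only [hu2def]; exact hpole₂
  have ha1 : a1 = Real.log (u1 x₁) - Real.log (u1 x₀) := by
    rw [ha1def, alphaDist_eq_log_sub g₁ x₀ x₁ h01 hpole₁]
  have ha2 : a2 = Real.log (u2 x₁) - Real.log (u2 x₀) := by
    rw [ha2def, alphaDist_eq_log_sub g₂ x₀ x₁ h01 hpole₂]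
  set F : ℝ → ℝ := fun x => 2 * (Real.log (u2 x) - Real.log (u1 x)) with hFdef
  set F' : ℝ → ℝ := fun x => 2 * (g₂ 1 0 / u2 x - g₁ 1 0 / u1 x) with hF'def
  set E := Real.exp (|a1| + |a2|) with hEdef
  set B := E * (x₁ - x₀) * (l₁ - l₀) / |a1 - a2| with hBdef
  have hE : 0 < E := Real.exp_pos _
  have habs : 0 < |a1 - a2| := abs_pos.2 (sub_ne_zero.2 hα)
  have hB0 : 0 ≤ B := by
    rw [hBdef]
    apply div_nonneg _ (abs_nonneg _)
    exact mul_nonneg (mul_nonneg hE.le (by linarith)) (by linarith)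
  -- F equals the log-derivative-ratio on I
  have hFlog : ∀ x ∈ Icc x₀ x₁,
      Real.log (mobiusDeriv g₁ x / mobiusDeriv g₂ x) = F x := by
    intro x hx
    have h1 : u1 x ≠ 0 := hu1 x hx
    have h2 : u2 x ≠ 0 := hu2 x hx
    have h1' : (g₁ 1 0 * x + g₁ 1 1 : ℝ) ≠ 0 := by simpa [hu1def] using h1
    have h2' : (g₂ 1 0 * x + g₂ 1 1 : ℝ) ≠ 0 := by simpa [hu2def] using h2
    rw [mobiusDeriv, mobiusDeriv,
      Real.log_div (inv_ne_zero (pow_ne_zero 2 h1')) (inv_ne_zero (pow_ne_zero 2 h2')),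
      Real.log_inv, Real.log_inv, Real.log_pow, Real.log_pow]
    simp only [hFdef, hu1def, hu2def]
    push_cast
    ring
  -- continuity of F
  have hcu1 : Continuous u1 := by rw [hu1def]; fun_prop
  have hcu2 : Continuous u2 := by rw [hu2def]; fun_prop
  have hcontF : ContinuousOn F (Icc x₀ x₁) := by
    rw [hFdef]
    exact continuousOn_const.mul ((hcu2.continuousOn.log hu2).sub (hcu1.continuousOn.log hu1))
  -- derivative of F
  have hderiv : ∀ x ∈ Icc x₀ x₁, HasDerivAt F (F' x) x := by
    intro x hx
    have h1 : HasDerivAt u1 (g₁ 1 0) x := by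
      rw [hu1def]
      simpa using ((hasDerivAt_id x).const_mul (g₁ 1 0)).add_const (g₁ 1 1)
    have h2 : HasDerivAt u2 (g₂ 1 0) x := by
      rw [hu2def]
      simpa using ((hasDerivAt_id x).const_mul (g₂ 1 0)).add_const (g₂ 1 1)
    have hl1 : HasDerivAt (fun y => Real.log (u1 y)) (g₁ 1 0 / u1 x) x := h1.log (hu1 x hx)
    have hl2 : HasDerivAt (fun y => Real.log (u2 y)) (g₂ 1 0 / u2 x) x := h2.log (hu2 x hx)
    have := (hl2.sub hl1).const_mul (2 : ℝ)
    rw [hFdef, hF'def]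
    simpa using this
  -- F' as a single fraction
  set D := g₂ 1 0 * g₁ 1 1 - g₁ 1 0 * g₂ 1 1 with hDdef
  have hF'eq : ∀ x ∈ Icc x₀ x₁, F' x = 2 * D / (u1 x * u2 x) := by
    intro x hx
    have h1 : u1 x ≠ 0 := hu1 x hx
    have h2 : u2 x ≠ 0 := hu2 x hx
    rw [hF'def, hDdef]
    simp only [hu1def, hu2def] at h1 h2 ⊢
    rw [div_sub_div _ _ h2 h1]
    ring
  -- min / max of |u_j| on I
  set m1 := min |u1 x₀| |u1 x₁| with hm1def
  set M1 := max |u1 x₀| |u1 x₁| with hM1def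
  set m2 := min |u2 x₀| |u2 x₁| with hm2def
  set M2 := max |u2 x₀| |u2 x₁| with hM2def
  have hm1 : 0 < m1 := lt_min (abs_pos.2 (hu1 x₀ (left_mem_Icc.2 h01)))
    (abs_pos.2 (hu1 x₁ (right_mem_Icc.2 h01)))
  have hm2 : 0 < m2 := lt_min (abs_pos.2 (hu2 x₀ (left_mem_Icc.2 h01)))
    (abs_pos.2 (hu2 x₁ (right_mem_Icc.2 h01)))
  have hM1 : 0 < M1 := lt_of_lt_of_le hm1 (min_le_max)
  have hM2 : 0 < M2 := lt_of_lt_of_le hm2 (min_le_max)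
  have hb1 : ∀ x ∈ Icc x₀ x₁, m1 ≤ |u1 x| ∧ |u1 x| ≤ M1 := by
    intro x hx
    have := linear_abs_bounds h01 hpole₁ hx
    simp only [hm1def, hM1def, hu1def]
    exact this
  have hb2 : ∀ x ∈ Icc x₀ x₁, m2 ≤ |u2 x| ∧ |u2 x| ≤ M2 := by
    intro x hx
    have := linear_abs_bounds h01 hpole₂ hx
    simp only [hm2def, hM2def, hu2def]
    exact this
  have hexp1 : M1 ≤ Real.exp |a1| * m1 := by
    apply exp_abs_ratio (abs_pos.2 (hu1 x₀ (left_mem_Icc.2 h01)))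
      (abs_pos.2 (hu1 x₁ (right_mem_Icc.2 h01)))
    rw [ha1, Real.log_abs, Real.log_abs]
  have hexp2 : M2 ≤ Real.exp |a2| * m2 := by
    apply exp_abs_ratio (abs_pos.2 (hu2 x₀ (left_mem_Icc.2 h01)))
      (abs_pos.2 (hu2 x₁ (right_mem_Icc.2 h01)))
    rw [ha2, Real.log_abs, Real.log_abs]
  -- mean value theorem on the whole interval
  have hend : F x₁ - F x₀ = 2 * (a2 - a1) := by
    rw [hFdef]
    simp only []
    rw [ha1, ha2]
    ring
  obtain ⟨ξ, hξmem, hξ⟩ := exists_hasDerivAt_eq_slope F F' hI hcontF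
    (fun x hx => hderiv x (Ioo_subset_Icc_self hx))
  have hξI : ξ ∈ Icc x₀ x₁ := Ioo_subset_Icc_self hξmem
  have hDbig : |a1 - a2| * (m1 * m2) ≤ |D| * (x₁ - x₀) := by
    have h1 : F' ξ = 2 * D / (u1 ξ * u2 ξ) := hF'eq ξ hξI
    have h2 : F' ξ = 2 * (a2 - a1) / (x₁ - x₀) := by rw [hξ, hend]
    have hne : u1 ξ * u2 ξ ≠ 0 := mul_ne_zero (hu1 ξ hξI) (hu2 ξ hξI)
    have h3 : 2 * D * (x₁ - x₀) = 2 * (a2 - a1) * (u1 ξ * u2 ξ) := by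
      have := h1.symm.trans h2
      rw [div_eq_div_iff hne (by linarith : (x₁ - x₀) ≠ 0)] at this
      linarith [this]
    have h4 := congrArg abs h3
    simp only [abs_mul] at h4
    rw [abs_of_pos (show (0:ℝ) < x₁ - x₀ by linarith), abs_two] at h4
    have key : |D| * (x₁ - x₀) = |a1 - a2| * (|u1 ξ| * |u2 ξ|) := by
      rw [abs_sub_comm a1 a2]
      linarith [h4]
    rw [key]
    have hprod : m1 * m2 ≤ |u1 ξ| * |u2 ξ| :=
      mul_le_mul (hb1 ξ hξI).1 (hb2 ξ hξI).1 hm2.le (abs_nonneg _)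
    exact mul_le_mul_of_nonneg_left hprod (abs_nonneg _)
  -- pointwise lower bound on |F'|
  have hK : ∀ x ∈ Icc x₀ x₁, 2 * |a1 - a2| / ((x₁ - x₀) * E) ≤ |F' x| := by
    intro x hx
    rw [hF'eq x hx, abs_div, abs_mul, abs_mul, abs_two]
    rw [div_le_div_iff₀ (mul_pos (by linarith : (0:ℝ) < x₁ - x₀) hE)
      (mul_pos (abs_pos.2 (hu1 x hx)) (abs_pos.2 (hu2 x hx)))]
    have e1 : |u1 x| * |u2 x| ≤ M1 * M2 :=
      mul_le_mul (hb1 x hx).2 (hb2 x hx).2 (abs_nonneg _) hM1.le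
    have e2 : M1 * M2 ≤ (Real.exp |a1| * m1) * (Real.exp |a2| * m2) :=
      mul_le_mul hexp1 hexp2 hM2.le (by positivity)
    have e3 : (Real.exp |a1| * m1) * (Real.exp |a2| * m2) = E * (m1 * m2) := by
      rw [hEdef, Real.exp_add]; ring
    have e4 : |u1 x| * |u2 x| ≤ E * (m1 * m2) := by
      calc |u1 x| * |u2 x| ≤ M1 * M2 := e1
        _ ≤ _ := e2
        _ = _ := e3
    have e5 : 2 * |a1 - a2| * (|u1 x| * |u2 x|) ≤ 2 * |a1 - a2| * (E * (m1 * m2)) := by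
      apply mul_le_mul_of_nonneg_left e4 (by positivity)
    have e6 : (2 * E) * (|a1 - a2| * (m1 * m2)) ≤ (2 * E) * (|D| * (x₁ - x₀)) :=
      mul_le_mul_of_nonneg_left hDbig (mul_nonneg (by norm_num) hE.le)
    linarith [e5, e6]
  -- two points in the level set are close
  have hS : ∀ x y : ℝ, x ∈ Icc x₀ x₁ → y ∈ Icc x₀ x₁ →
      Real.log (mobiusDeriv g₁ x / mobiusDeriv g₂ x) ∈ Icc l₀ l₁ →
      Real.log (mobiusDeriv g₁ y / mobiusDeriv g₂ y) ∈ Icc l₀ l₁ →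
      y - x ≤ B / 2 := by
    intro x y hx hy hxL hyL
    rcases le_or_gt y x with hyx | hxy
    · linarith
    · rw [hFlog x hx] at hxL
      rw [hFlog y hy] at hyL
      obtain ⟨η, hηmem, hη⟩ := exists_hasDerivAt_eq_slope F F' hxy
        (hcontF.mono (Icc_subset_Icc hx.1 hy.2))
        (fun z hz => hderiv z ⟨le_trans hx.1 hz.1.le, le_trans hz.2.le hy.2⟩)
      have hηI : η ∈ Icc x₀ x₁ := ⟨le_trans hx.1 hηmem.1.le, le_trans hηmem.2.le hy.2⟩
      have hFd : |F y - F x| ≤ l₁ - l₀ := by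
        rw [abs_sub_le_iff]
        constructor <;> [linarith [hxL.1, hyL.2]; linarith [hyL.1, hxL.2]]
      have h := hK η hηI
      rw [hη, abs_div, abs_of_pos (sub_pos.2 hxy)] at h
      have step0 : 2 * |a1 - a2| / ((x₁ - x₀) * E) * (y - x) ≤ |F y - F x| :=
        (le_div_iff₀ (sub_pos.2 hxy)).1 h
      have step1 : 2 * |a1 - a2| / ((x₁ - x₀) * E) * (y - x) ≤ l₁ - l₀ :=
        le_trans step0 hFd
      have hpos : 0 < (x₁ - x₀) * E := mul_pos (by linarith) hE
      rw [div_mul_eq_mul_div, div_le_iff₀ hpos] at step1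
      rw [hBdef, div_div, le_div_iff₀ (mul_pos habs two_pos)]
      linarith [step1]
  -- conclusion
  rcases eq_empty_or_nonempty
    {x ∈ Icc x₀ x₁ | Real.log (mobiusDeriv g₁ x / mobiusDeriv g₂ x) ∈ Icc l₀ l₁} with he | hne
  · refine ⟨0, 0, ?_, ?_⟩
    · simpa using hB0
    · rw [he]; exact empty_subset _
  · obtain ⟨s₀, hs₀⟩ := hne
    obtain ⟨hsI, hsL⟩ := hs₀
    refine ⟨s₀ - B / 2, s₀ + B / 2, by linarith, ?_⟩
    intro x hx
    obtain ⟨hxI, hxL⟩ := hx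
    constructor
    · have := hS x s₀ hxI hsI hxL hsL
      linarith
    · have := hS s₀ x hsI hxI hsL hxL
      linarith

end
end

section
/- There exists a constant C_Γ > 1, depending only on the Schottky data, such that for every nonempty word 𝐚 ∈ W° and every letter b ∈ A with 𝐚 → b, one has |I_{𝐚b}| ≤ (1 − C_Γ^{-1}) |I_𝐚|. -/
open MeasureTheory Set Real Pointwise

noncomputable section

/-- The derivative of the Möbius transformation in the ball model,
`|γ'(x)|_B = ((1+x²)/(1+γ(x)²)) γ'(x)`. -/
def mobiusDerivB (g : SL2) (x : ℝ) : ℝ :=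
  ((1 + x ^ 2) / (1 + mobius g x ^ 2)) * mobiusDeriv g x

/-- The Möbius action of `SL(2,ℝ)` on `ℝ ∪ {∞}`. -/
def mobiusOP (g : SL2) (x : OnePoint ℝ) : OnePoint ℝ :=
  Option.elim x
    (if g 1 0 = 0 then OnePoint.infty else ((g 0 0 / g 1 0 : ℝ) : OnePoint ℝ))
    (fun y => if g 1 0 * y + g 1 1 = 0 then OnePoint.infty
      else ((mobius g y : ℝ) : OnePoint ℝ))

/-- The letter `ā` paired with `a` in the alphabet `{1,…,2r}` (modelled by `Fin (2r)`). -/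
def bar {r : ℕ} (a : Fin (2 * r)) : Fin (2 * r) :=
  if h : (a : ℕ) < r then ⟨(a : ℕ) + r, by omega⟩
  else ⟨(a : ℕ) - r, by have := a.isLt; omega⟩

/-- Schottky data: `2r` disjoint compact intervals `I_a = [ξ₀ a, ξ₁ a]` on the real line and
transformations `γ_a ∈ SL(2,ℝ)` with `γ_ā = γ_a⁻¹` such that `γ_a` maps the complement (in
`ℝ ∪ {∞}`) of the interior of `I_ā` onto `I_a`. -/
structure SchottkyData (r : ℕ) where
  hr : 2 ≤ r
  ξ₀ : Fin (2 * r) → ℝ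
  ξ₁ : Fin (2 * r) → ℝ
  hlt : ∀ a, ξ₀ a < ξ₁ a
  hdisj : ∀ a b, a ≠ b → Disjoint (Icc (ξ₀ a) (ξ₁ a)) (Icc (ξ₀ b) (ξ₁ b))
  γ : Fin (2 * r) → SL2
  hinv : ∀ a, γ (bar a) = (γ a)⁻¹
  hmap : ∀ a, mobiusOP (γ a) ''
      (univ \ ((fun t : ℝ => (t : OnePoint ℝ)) '' Ioo (ξ₀ (bar a)) (ξ₁ (bar a))))
      = (fun t : ℝ => (t : OnePoint ℝ)) '' Icc (ξ₀ a) (ξ₁ a)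

namespace SchottkyData

variable {r : ℕ}

/-- `l` is a word: no letter is followed by its bar. -/
def IsWord (_ : SchottkyData r) (l : List (Fin (2 * r))) : Prop :=
  l.Chain' fun p q => q ≠ bar p

/-- The group element `γ_𝐚 = γ_{a_1} ⋯ γ_{a_n}` of a word. -/
def wordγ (S : SchottkyData r) (l : List (Fin (2 * r))) : SL2 :=
  (l.map S.γ).prod

/-- The interval `I_𝐚 = γ_{𝐚'}(I_{a_n})` of a nonempty word (and `∅` for the empty word). -/
def wordI (S : SchottkyData r) (l : List (Fin (2 * r))) : Set ℝ :=
  if h : l = [] then ∅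
  else mobius (S.wordγ l.dropLast) '' Icc (S.ξ₀ (l.getLast h)) (S.ξ₁ (l.getLast h))

/-- The limit set `Λ_Γ = ⋂_n ⋃_{𝐚 ∈ W_n} I_𝐚`. -/
def limitSet (S : SchottkyData r) : Set ℝ :=
  ⋂ n : ℕ, ⋃ (l : List (Fin (2 * r))) (_ : S.IsWord l ∧ l.length = n + 1), S.wordI l

/-- `μ` is the (δ-conformal) Patterson–Sullivan measure: a Borel probability measure
supported on the limit set satisfying the equivariance property under the group
generated by the Schottky transformations. -/
def IsPS (S : SchottkyData r) (δ : ℝ) (μ : Measure ℝ) : Prop :=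
  IsProbabilityMeasure μ ∧ μ S.limitSetᶜ = 0 ∧
    ∀ g ∈ Subgroup.closure (Set.range S.γ), ∀ f : ℝ → ℝ, Measurable f →
      (∃ C, ∀ x, |f x| ≤ C) →
      ∫ x, f x ∂μ = ∫ x, f (mobius g x) * mobiusDerivB g x ^ δ ∂μ

/-- The partition `Z(τ) = {𝐚 ∈ W° : |I_𝐚| ≤ τ < |I_{𝐚'}|}` (with `|I_∅| = ∞`). -/
def Zpart (S : SchottkyData r) (τ : ℝ) : Set (List (Fin (2 * r))) :=
  {l | S.IsWord l ∧ l ≠ [] ∧ (MeasureTheory.volume (S.wordI l)).toReal ≤ τ ∧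
    (l.dropLast = [] ∨ τ < (MeasureTheory.volume (S.wordI l.dropLast)).toReal)}

end SchottkyData

/-- The length `|I|` of an interval `I ⊂ ℝ`. -/
def ivlen (I : Set ℝ) : ℝ := (MeasureTheory.volume I).toReal

/-- `𝐚 ⇝ 𝐛` : the last letter of `𝐚` equals the first letter of `𝐛`. -/
def chn {X : Type*} (l m : List X) : Prop :=
  ∃ (h1 : l ≠ []) (h2 : m ≠ []), l.getLast h1 = m.head h2

/-- The center of an interval. -/
def ctr (I : Set ℝ) : ℝ := (sInf I + sSup I) / 2

end

noncomputable section

open MeasureTheory Set Real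

-- ===================== auxiliary lemmas =====================

lemma sl2_det (g : SL2) : g 0 0 * g 1 1 - g 0 1 * g 1 0 = 1 := by
  have := g.2
  rw [Matrix.det_fin_two] at this
  exact this

lemma mobius_diff (g : SL2) {x y : ℝ} (hx : g 1 0 * x + g 1 1 ≠ 0)
    (hy : g 1 0 * y + g 1 1 ≠ 0) :
    mobius g y - mobius g x = (y - x) / ((g 1 0 * x + g 1 1) * (g 1 0 * y + g 1 1)) := by
  have hdet := sl2_det g
  unfold mobius
  rw [div_sub_div _ _ hy hx, div_eq_div_iff (mul_ne_zero hy hx) (mul_ne_zero hx hy)]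
  linear_combination (y - x) * (g 1 0 * x + g 1 1) * (g 1 0 * y + g 1 1) * hdet

lemma sl2_mul_apply (g h : SL2) (i j : Fin 2) :
    (g * h) i j = g i 0 * h 0 j + g i 1 * h 1 j := by
  rw [Matrix.SpecialLinearGroup.coe_mul, Matrix.mul_apply, Fin.sum_univ_two]

lemma sl2_one_apply (i j : Fin 2) : (1 : SL2) i j = if i = j then 1 else 0 := by
  rw [Matrix.SpecialLinearGroup.coe_one, Matrix.one_apply]

lemma mobius_one (x : ℝ) : mobius 1 x = x := by
  simp [mobius, sl2_one_apply]

lemma den_mul (g h : SL2) (x : ℝ) (hx : h 1 0 * x + h 1 1 ≠ 0) :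
    (g * h) 1 0 * x + (g * h) 1 1
      = (g 1 0 * mobius h x + g 1 1) * (h 1 0 * x + h 1 1) := by
  rw [sl2_mul_apply, sl2_mul_apply]
  unfold mobius
  field_simp
  ring

lemma mobius_mul (g h : SL2) (x : ℝ) (hx : h 1 0 * x + h 1 1 ≠ 0) :
    mobius (g * h) x = mobius g (mobius h x) := by
  unfold mobius
  rw [sl2_mul_apply, sl2_mul_apply, sl2_mul_apply, sl2_mul_apply]
  field_simp
  ring

/-- Denominators have constant sign on an interval where they do not vanish. -/
lemma den_prod_pos (g : SL2) {k₀ k₁ : ℝ} (hk : k₀ ≤ k₁)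
    (hden : ∀ t ∈ Icc k₀ k₁, g 1 0 * t + g 1 1 ≠ 0)
    {x y : ℝ} (hx : x ∈ Icc k₀ k₁) (hy : y ∈ Icc k₀ k₁) :
    0 < (g 1 0 * x + g 1 1) * (g 1 0 * y + g 1 1) := by
  obtain ⟨hx0, hx1⟩ := hx
  obtain ⟨hy0, hy1⟩ := hy
  rcases lt_trichotomy (g 1 0) 0 with hc | hc | hc
  · have hc' : g 1 0 ≠ 0 := ne_of_lt hc
    have hp : g 1 0 * (-(g 1 1) / g 1 0) + g 1 1 = 0 := by field_simp; ring
    have hnp : -(g 1 1) / g 1 0 ∉ Icc k₀ k₁ := fun h => hden _ h hp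
    rw [mem_Icc, not_and_or, not_le, not_le] at hnp
    have hkey : -(g 1 1) = g 1 0 * (-(g 1 1) / g 1 0) := by field_simp
    rcases hnp with h | h
    · have h1 : g 1 0 * x + g 1 1 < 0 := by nlinarith
      have h2 : g 1 0 * y + g 1 1 < 0 := by nlinarith
      exact mul_pos_of_neg_of_neg h1 h2
    · have h1 : 0 < g 1 0 * x + g 1 1 := by nlinarith
      have h2 : 0 < g 1 0 * y + g 1 1 := by nlinarith
      exact mul_pos h1 h2
  · have hd : g 1 1 ≠ 0 := by
      have := hden k₀ ⟨le_refl _, hk⟩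
      simpa [hc] using this
    rw [hc]
    simpa using mul_self_pos.mpr hd
  · have hc' : g 1 0 ≠ 0 := ne_of_gt hc
    have hp : g 1 0 * (-(g 1 1) / g 1 0) + g 1 1 = 0 := by field_simp; ring
    have hnp : -(g 1 1) / g 1 0 ∉ Icc k₀ k₁ := fun h => hden _ h hp
    rw [mem_Icc, not_and_or, not_le, not_le] at hnp
    have hkey : -(g 1 1) = g 1 0 * (-(g 1 1) / g 1 0) := by field_simp
    rcases hnp with h | h
    · have h1 : 0 < g 1 0 * x + g 1 1 := by nlinarith
      have h2 : 0 < g 1 0 * y + g 1 1 := by nlinarith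
      exact mul_pos h1 h2
    · have h1 : g 1 0 * x + g 1 1 < 0 := by nlinarith
      have h2 : g 1 0 * y + g 1 1 < 0 := by nlinarith
      exact mul_pos_of_neg_of_neg h1 h2

lemma mobius_lt (g : SL2) {k₀ k₁ : ℝ} (hk : k₀ ≤ k₁)
    (hden : ∀ t ∈ Icc k₀ k₁, g 1 0 * t + g 1 1 ≠ 0)
    {x y : ℝ} (hx : x ∈ Icc k₀ k₁) (hy : y ∈ Icc k₀ k₁) (hxy : x < y) :
    mobius g x < mobius g y := by
  have h := mobius_diff g (hden x hx) (hden y hy)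
  have hpos := den_prod_pos g hk hden hx hy
  have : 0 < mobius g y - mobius g x := by
    rw [h]
    exact div_pos (by linarith) hpos
  linarith

lemma mobius_image_Icc (g : SL2) {k₀ k₁ : ℝ} (hk : k₀ ≤ k₁)
    (hden : ∀ t ∈ Icc k₀ k₁, g 1 0 * t + g 1 1 ≠ 0) :
    mobius g '' Icc k₀ k₁ = Icc (mobius g k₀) (mobius g k₁) := by
  have hmono : ∀ x ∈ Icc k₀ k₁, ∀ y ∈ Icc k₀ k₁, x ≤ y → mobius g x ≤ mobius g y := by
    intro x hx y hy hxy
    rcases eq_or_lt_of_le hxy with rfl | h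
    · exact le_rfl
    · exact (mobius_lt g hk hden hx hy h).le
  have hcont : ContinuousOn (mobius g) (Icc k₀ k₁) := by
    apply ContinuousOn.div
    · fun_prop
    · fun_prop
    · exact hden
  apply Subset.antisymm
  · rintro _ ⟨t, ht, rfl⟩
    exact ⟨hmono k₀ ⟨le_rfl, hk⟩ t ht ht.1, hmono t ht k₁ ⟨hk, le_rfl⟩ ht.2⟩
  · exact intermediate_value_Icc hk hcont

section SchottkyLemmas

variable {r : ℕ} (S : SchottkyData r)

lemma schottky_c_ne (c : Fin (2 * r)) : (S.γ c) 1 0 ≠ 0 := by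
  intro h0
  have hdom : OnePoint.infty ∈
      (univ \ ((fun t : ℝ => (t : OnePoint ℝ)) '' Ioo (S.ξ₀ (bar c)) (S.ξ₁ (bar c)))) := by
    refine ⟨mem_univ _, ?_⟩
    rintro ⟨t, -, ht⟩
    exact OnePoint.coe_ne_infty t ht
  have hmem : mobiusOP (S.γ c) OnePoint.infty ∈
      (fun t : ℝ => (t : OnePoint ℝ)) '' Icc (S.ξ₀ c) (S.ξ₁ c) := by
    rw [← S.hmap c]; exact ⟨_, hdom, rfl⟩
  have heq : mobiusOP (S.γ c) OnePoint.infty = OnePoint.infty := by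
    show (if (S.γ c) 1 0 = 0 then OnePoint.infty else _) = OnePoint.infty
    rw [if_pos h0]
  rw [heq] at hmem
  obtain ⟨t, -, ht⟩ := hmem
  exact OnePoint.coe_ne_infty t ht

lemma schottky_pole_mem (c : Fin (2 * r)) :
    -((S.γ c) 1 1) / ((S.γ c) 1 0) ∈ Ioo (S.ξ₀ (bar c)) (S.ξ₁ (bar c)) := by
  by_contra h
  set p : ℝ := -((S.γ c) 1 1) / ((S.γ c) 1 0) with hp
  have hc := schottky_c_ne S c
  have hden0 : (S.γ c) 1 0 * p + (S.γ c) 1 1 = 0 := by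
    rw [hp]; field_simp; ring
  have hdom : (p : OnePoint ℝ) ∈
      (univ \ ((fun t : ℝ => (t : OnePoint ℝ)) '' Ioo (S.ξ₀ (bar c)) (S.ξ₁ (bar c)))) := by
    refine ⟨mem_univ _, ?_⟩
    rintro ⟨t, ht, hte⟩
    exact h (OnePoint.coe_eq_coe.mp hte ▸ ht)
  have hmem : mobiusOP (S.γ c) (p : OnePoint ℝ) ∈
      (fun t : ℝ => (t : OnePoint ℝ)) '' Icc (S.ξ₀ c) (S.ξ₁ c) := by
    rw [← S.hmap c]; exact ⟨_, hdom, rfl⟩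
  have heq : mobiusOP (S.γ c) (p : OnePoint ℝ) = OnePoint.infty := by
    show (if (S.γ c) 1 0 * p + (S.γ c) 1 1 = 0 then OnePoint.infty else _) = OnePoint.infty
    rw [if_pos hden0]
  rw [heq] at hmem
  obtain ⟨t, -, ht⟩ := hmem
  exact OnePoint.coe_ne_infty t ht

lemma schottky_den_ne (c : Fin (2 * r)) {x : ℝ}
    (hx : x ∉ Ioo (S.ξ₀ (bar c)) (S.ξ₁ (bar c))) :
    (S.γ c) 1 0 * x + (S.γ c) 1 1 ≠ 0 := by
  intro h0
  have hc := schottky_c_ne S c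
  have : x = -((S.γ c) 1 1) / ((S.γ c) 1 0) := by
    field_simp
    linear_combination h0
  exact hx (this ▸ schottky_pole_mem S c)

lemma schottky_maps_into (c : Fin (2 * r)) {x : ℝ}
    (hx : x ∉ Ioo (S.ξ₀ (bar c)) (S.ξ₁ (bar c))) :
    mobius (S.γ c) x ∈ Icc (S.ξ₀ c) (S.ξ₁ c) := by
  have hden := schottky_den_ne S c hx
  have hdom : (x : OnePoint ℝ) ∈
      (univ \ ((fun t : ℝ => (t : OnePoint ℝ)) '' Ioo (S.ξ₀ (bar c)) (S.ξ₁ (bar c)))) := by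
    refine ⟨mem_univ _, ?_⟩
    rintro ⟨t, ht, hte⟩
    exact hx (OnePoint.coe_eq_coe.mp hte ▸ ht)
  have hmem : mobiusOP (S.γ c) (x : OnePoint ℝ) ∈
      (fun t : ℝ => (t : OnePoint ℝ)) '' Icc (S.ξ₀ c) (S.ξ₁ c) := by
    rw [← S.hmap c]; exact ⟨_, hdom, rfl⟩
  have heq : mobiusOP (S.γ c) (x : OnePoint ℝ) = ((mobius (S.γ c) x : ℝ) : OnePoint ℝ) := by
    show (if (S.γ c) 1 0 * x + (S.γ c) 1 1 = 0 then OnePoint.infty else _) = _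
    rw [if_neg hden]
  rw [heq] at hmem
  obtain ⟨t, ht, hte⟩ := hmem
  exact OnePoint.coe_eq_coe.mp hte ▸ ht

/-- `mobius (γ c) t - a/c = -1/(c(ct+d))`. -/
lemma mobius_sub_limit (g : SL2) {t : ℝ} (hc : g 1 0 ≠ 0)
    (ht : g 1 0 * t + g 1 1 ≠ 0) :
    mobius g t - g 0 0 / g 1 0 = -1 / (g 1 0 * (g 1 0 * t + g 1 1)) := by
  have hdet := sl2_det g
  unfold mobius
  rw [div_sub_div _ _ ht hc, div_eq_div_iff (mul_ne_zero ht hc) (mul_ne_zero hc ht)]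
  linear_combination (-(g 1 0 * t) - g 1 1) * g 1 0 * hdet

lemma schottky_maps_strict (c : Fin (2 * r)) {x : ℝ}
    (hx : x ∉ Icc (S.ξ₀ (bar c)) (S.ξ₁ (bar c))) :
    mobius (S.γ c) x ∈ Ioo (S.ξ₀ c) (S.ξ₁ c) := by
  have hc := schottky_c_ne S c
  have hpole := schottky_pole_mem S c
  set p : ℝ := -((S.γ c) 1 1) / ((S.γ c) 1 0) with hpdef
  have hkey : -((S.γ c) 1 1) = (S.γ c) 1 0 * p := by rw [hpdef]; field_simp
  have hIoo : ∀ y : ℝ, y ∉ Icc (S.ξ₀ (bar c)) (S.ξ₁ (bar c)) →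
      y ∉ Ioo (S.ξ₀ (bar c)) (S.ξ₁ (bar c)) := fun y hy h => hy (Ioo_subset_Icc_self h)
  have hdenx := schottky_den_ne S c (hIoo x hx)
  have hxIcc := schottky_maps_into S c (hIoo x hx)
  -- the point at infinity image a/c lies strictly inside I_c
  have hAmem : (S.γ c) 0 0 / (S.γ c) 1 0 ∈ Icc (S.ξ₀ c) (S.ξ₁ c) := by
    have hdom : OnePoint.infty ∈
        (univ \ ((fun t : ℝ => (t : OnePoint ℝ)) '' Ioo (S.ξ₀ (bar c)) (S.ξ₁ (bar c)))) := by
      refine ⟨mem_univ _, ?_⟩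
      rintro ⟨t, -, ht⟩
      exact OnePoint.coe_ne_infty t ht
    have hmem : mobiusOP (S.γ c) OnePoint.infty ∈
        (fun t : ℝ => (t : OnePoint ℝ)) '' Icc (S.ξ₀ c) (S.ξ₁ c) := by
      rw [← S.hmap c]; exact ⟨_, hdom, rfl⟩
    have heq : mobiusOP (S.γ c) OnePoint.infty
        = (((S.γ c) 0 0 / (S.γ c) 1 0 : ℝ) : OnePoint ℝ) := by
      show (if (S.γ c) 1 0 = 0 then OnePoint.infty else _) = _
      rw [if_neg hc]
    rw [heq] at hmem
    obtain ⟨t, ht, hte⟩ := hmem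
    exact OnePoint.coe_eq_coe.mp hte ▸ ht
  set A : ℝ := (S.γ c) 0 0 / (S.γ c) 1 0
  -- endpoints of I_{bar c} are not the pole
  have hd0 : (S.γ c) 1 0 * (S.ξ₀ (bar c)) + (S.γ c) 1 1 ≠ 0 :=
    schottky_den_ne S c (by simp [mem_Ioo])
  have hd1 : (S.γ c) 1 0 * (S.ξ₁ (bar c)) + (S.γ c) 1 1 ≠ 0 :=
    schottky_den_ne S c (by simp [mem_Ioo])
  have hm0 := schottky_maps_into S c (x := S.ξ₀ (bar c)) (by simp [mem_Ioo])
  have hm1 := schottky_maps_into S c (x := S.ξ₁ (bar c)) (by simp [mem_Ioo])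
  -- sign facts
  have hfact : ∀ t : ℝ, (S.γ c) 1 0 * ((S.γ c) 1 0 * t + (S.γ c) 1 1)
      = ((S.γ c) 1 0 * (S.γ c) 1 0) * (t - p) := by
    intro t
    rw [hpdef]
    field_simp
    ring
  have hsign : ∀ t : ℝ, p < t → 0 < (S.γ c) 1 0 * ((S.γ c) 1 0 * t + (S.γ c) 1 1) := by
    intro t ht
    rw [hfact t]
    exact mul_pos (mul_self_pos.mpr hc) (by linarith)
  have hsign' : ∀ t : ℝ, t < p → (S.γ c) 1 0 * ((S.γ c) 1 0 * t + (S.γ c) 1 1) < 0 := by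
    intro t ht
    rw [hfact t]
    exact mul_neg_of_pos_of_neg (mul_self_pos.mpr hc) (by linarith)
  have hlt1 : mobius (S.γ c) (S.ξ₁ (bar c)) < A := by
    have h := mobius_sub_limit (S.γ c) hc hd1
    have := hsign _ hpole.2
    have : mobius (S.γ c) (S.ξ₁ (bar c)) - A < 0 := by
      rw [h]; exact div_neg_of_neg_of_pos (by norm_num) this
    linarith
  have hgt0 : A < mobius (S.γ c) (S.ξ₀ (bar c)) := by
    have h := mobius_sub_limit (S.γ c) hc hd0
    have := hsign' _ hpole.1
    have : 0 < mobius (S.γ c) (S.ξ₀ (bar c)) - A := by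
      rw [h]; exact div_pos_of_neg_of_neg (by norm_num) this
    linarith
  rw [mem_Icc, not_and_or, not_le, not_le] at hx
  rcases hx with hxl | hxr
  · -- x < ξ₀(bar c) < p :  A < mobius x < mobius (ξ₀ bar c) ≤ ξ₁ c
    have hxp : x < p := hxl.trans hpole.1
    have hsx := hsign' _ hxp
    have hup : A < mobius (S.γ c) x := by
      have h := mobius_sub_limit (S.γ c) hc hdenx
      have : 0 < mobius (S.γ c) x - A := by
        rw [h]; exact div_pos_of_neg_of_neg (by norm_num) hsx
      linarith
    have hlo : mobius (S.γ c) x < mobius (S.γ c) (S.ξ₀ (bar c)) := by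
      have h := mobius_diff (S.γ c) hdenx hd0
      have hprod : 0 < ((S.γ c) 1 0 * x + (S.γ c) 1 1) *
          ((S.γ c) 1 0 * (S.ξ₀ (bar c)) + (S.γ c) 1 1) := by
        have hs0 := hsign' _ hpole.1
        nlinarith [mul_pos_of_neg_of_neg hsx hs0, mul_self_pos.mpr hc]
      have : 0 < mobius (S.γ c) (S.ξ₀ (bar c)) - mobius (S.γ c) x := by
        rw [h]; exact div_pos (by linarith) hprod
      linarith
    exact ⟨by linarith [hAmem.1], by linarith [hm0.2]⟩
  · -- ξ₁(bar c) < x,  p < x : ξ₀ c ≤ mobius (ξ₁ bar c) < mobius x < A ≤ ξ₁ c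
    have hxp : p < x := hpole.2.trans hxr
    have hsx := hsign _ hxp
    have hup : mobius (S.γ c) x < A := by
      have h := mobius_sub_limit (S.γ c) hc hdenx
      have : mobius (S.γ c) x - A < 0 := by
        rw [h]; exact div_neg_of_neg_of_pos (by norm_num) hsx
      linarith
    have hlo : mobius (S.γ c) (S.ξ₁ (bar c)) < mobius (S.γ c) x := by
      have h := mobius_diff (S.γ c) hd1 hdenx
      have hprod : 0 < ((S.γ c) 1 0 * (S.ξ₁ (bar c)) + (S.γ c) 1 1) *
          ((S.γ c) 1 0 * x + (S.γ c) 1 1) := by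
        have hs1 := hsign _ hpole.2
        nlinarith [mul_pos hs1 hsx, mul_self_pos.mpr hc]
      have : 0 < mobius (S.γ c) x - mobius (S.γ c) (S.ξ₁ (bar c)) := by
        rw [h]; exact div_pos (by linarith) hprod
      linarith
    exact ⟨by linarith [hm1.1], by linarith [hAmem.2]⟩

end SchottkyLemmas

/-- Along a word, denominators do not vanish and points of the last interval are
mapped into the interval of the first letter. -/
lemma word_maps {r : ℕ} (S : SchottkyData r) :
    ∀ (m : List (Fin (2 * r))) (e : Fin (2 * r)), S.IsWord (m ++ [e]) →
    ∀ x ∈ Icc (S.ξ₀ e) (S.ξ₁ e),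
      ((S.wordγ m) 1 0 * x + (S.wordγ m) 1 1 ≠ 0) ∧
      mobius (S.wordγ m) x ∈
        Icc (S.ξ₀ ((m ++ [e]).head (by simp))) (S.ξ₁ ((m ++ [e]).head (by simp))) := by
  intro m
  induction m with
  | nil =>
    intro e _ x hx
    constructor
    · simp [SchottkyData.wordγ, sl2_one_apply]
    · simpa [SchottkyData.wordγ, mobius_one] using hx
  | cons c m' ih =>
    intro e hw x hx
    rw [SchottkyData.IsWord, List.cons_append, List.Chain', List.isChain_cons] at hw
    obtain ⟨hhd0, hw'⟩ := hw
    have hhd : ((m' ++ [e]).head (by simp)) ≠ bar c := by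
      apply hhd0
      rw [List.head?_eq_head (by simp)]
      rfl
    obtain ⟨hden', hmem'⟩ := ih e hw' x hx
    set y := mobius (S.wordγ m') x with hy
    have hynot : y ∉ Icc (S.ξ₀ (bar c)) (S.ξ₁ (bar c)) := by
      intro h
      exact (Set.disjoint_left.mp (S.hdisj _ _ hhd)) hmem' h
    have hden2 : (S.γ c) 1 0 * y + (S.γ c) 1 1 ≠ 0 :=
      schottky_den_ne S c (fun h => hynot (Ioo_subset_Icc_self h))
    have hstr := schottky_maps_strict S c hynot
    have hγ : S.wordγ (c :: m') = S.γ c * S.wordγ m' := by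
      simp [SchottkyData.wordγ]
    refine ⟨?_, ?_⟩
    · rw [hγ, den_mul _ _ _ hden']
      exact mul_ne_zero hden2 hden'
    · rw [hγ, mobius_mul _ _ _ hden']
      have hhead : (((c :: m') ++ [e]).head (by simp)) = c := rfl
      rw [hhead]
      exact Ioo_subset_Icc_self hstr

/-- Key cross-ratio distortion inequality for Möbius maps. -/
lemma distortion_key (g : SL2) {k₀ u v k₁ : ℝ}
    (hden : ∀ t ∈ Icc k₀ k₁, g 1 0 * t + g 1 1 ≠ 0)
    (h0u : k₀ < u) (huv : u < v) (hv1 : v < k₁) :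
    mobius g v - mobius g u ≤
      ((v - u) * (k₁ - k₀)) / ((v - k₀) * (k₁ - u)) * (mobius g k₁ - mobius g k₀) := by
  have hk : k₀ ≤ k₁ := by linarith
  have hm0 : k₀ ∈ Icc k₀ k₁ := ⟨le_rfl, hk⟩
  have hm1 : k₁ ∈ Icc k₀ k₁ := ⟨hk, le_rfl⟩
  have hmu : u ∈ Icc k₀ k₁ := ⟨h0u.le, by linarith⟩
  have hmv : v ∈ Icc k₀ k₁ := ⟨by linarith, hv1.le⟩
  have d0 := hden _ hm0
  have d1 := hden _ hm1
  have du := hden _ hmu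
  have dv := hden _ hmv
  have hA0U := mobius_lt g hk hden hm0 hmu h0u
  have hUV := mobius_lt g hk hden hmu hmv huv
  have hVA1 := mobius_lt g hk hden hmv hm1 hv1
  set A0 := mobius g k₀
  set A1 := mobius g k₁
  set U := mobius g u
  set V := mobius g v
  have hA0A1 : 0 < A1 - A0 := by linarith
  have hq : 0 < (v - u) * (k₁ - k₀) := mul_pos (by linarith) (by linarith)
  have hs : 0 < (v - k₀) * (k₁ - u) := mul_pos (by linarith) (by linarith)
  have e1 : (V - U) * (A1 - A0) * ((v - k₀) * (k₁ - u))
      = ((v - u) * (k₁ - k₀)) * ((V - A0) * (A1 - U)) := by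
    have h1 : V - U = (v - u) / ((g 1 0 * u + g 1 1) * (g 1 0 * v + g 1 1)) :=
      mobius_diff g du dv
    have h2 : A1 - A0 = (k₁ - k₀) / ((g 1 0 * k₀ + g 1 1) * (g 1 0 * k₁ + g 1 1)) :=
      mobius_diff g d0 d1
    have h3 : V - A0 = (v - k₀) / ((g 1 0 * k₀ + g 1 1) * (g 1 0 * v + g 1 1)) :=
      mobius_diff g d0 dv
    have h4 : A1 - U = (k₁ - u) / ((g 1 0 * u + g 1 1) * (g 1 0 * k₁ + g 1 1)) :=
      mobius_diff g du d1
    rw [h1, h2, h3, h4]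
    field_simp
  have e2 : (V - A0) * (A1 - U) ≤ (A1 - A0) * (A1 - A0) :=
    mul_le_mul (by linarith) (by linarith) (by linarith) (by linarith)
  rw [div_mul_eq_mul_div, le_div_iff₀ hs]
  nlinarith [e1, mul_le_mul_of_nonneg_left e2 hq.le, hA0A1, hq, hs]


/-- **Uniform contraction of the intervals of the Schottky structure:**
there is `C_Γ > 1` depending only on the Schottky data such that
`|I_{𝐚b}| ≤ (1 − C_Γ⁻¹)|I_𝐚|` for all nonempty words `𝐚` and letters `b` with `𝐚 → b`. -/
theorem interval_contraction (r : ℕ) (S : SchottkyData r) :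
    ∃ C > (1 : ℝ), ∀ (l : List (Fin (2 * r))) (b : Fin (2 * r)),
      l ≠ [] → S.IsWord (l ++ [b]) →
      ivlen (S.wordI (l ++ [b])) ≤ (1 - C⁻¹) * ivlen (S.wordI l) := by
  have hr := S.hr
  have hne : (Finset.univ : Finset (Fin (2 * r) × Fin (2 * r))).Nonempty :=
    ⟨(⟨0, by omega⟩, ⟨0, by omega⟩), Finset.mem_univ _⟩
  set Qf : Fin (2 * r) × Fin (2 * r) → ℝ := fun p =>
    ((mobius (S.γ p.1) (S.ξ₁ p.2) - S.ξ₀ p.1) * (S.ξ₁ p.1 - mobius (S.γ p.1) (S.ξ₀ p.2))) /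
      ((mobius (S.γ p.1) (S.ξ₁ p.2) - mobius (S.γ p.1) (S.ξ₀ p.2)) * (S.ξ₁ p.1 - S.ξ₀ p.1))
    with hQf
  refine ⟨max 2 (Finset.univ.sup' hne fun p => Qf p / (Qf p - 1)),
    lt_of_lt_of_le one_lt_two (le_max_left _ _), ?_⟩
  set C : ℝ := max 2 (Finset.univ.sup' hne fun p => Qf p / (Qf p - 1)) with hC
  intro l b hl hw
  obtain ⟨m, c, rfl⟩ : ∃ m c, l = m ++ [c] :=
    ⟨l.dropLast, l.getLast hl, (List.dropLast_append_getLast hl).symm⟩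
  rw [SchottkyData.IsWord, List.Chain', List.isChain_append] at hw
  obtain ⟨hw1, -, hlast⟩ := hw
  have hbc : b ≠ bar c := by
    refine hlast c ?_ b ?_
    · rw [List.getLast?_concat]
      rfl
    · rfl
  have hw1' : S.IsWord (m ++ [c]) := hw1
  have hk : S.ξ₀ c < S.ξ₁ c := S.hlt c
  have hdenF : ∀ t ∈ Icc (S.ξ₀ c) (S.ξ₁ c),
      (S.wordγ m) 1 0 * t + (S.wordγ m) 1 1 ≠ 0 :=
    fun t ht => (word_maps S m c hw1' t ht).1
  have hkb : S.ξ₀ b ≤ S.ξ₁ b := (S.hlt b).le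
  have hdisjb : ∀ t ∈ Icc (S.ξ₀ b) (S.ξ₁ b),
      t ∉ Icc (S.ξ₀ (bar c)) (S.ξ₁ (bar c)) :=
    fun t ht h => Set.disjoint_left.mp (S.hdisj _ _ hbc) ht h
  have hdenc : ∀ t ∈ Icc (S.ξ₀ b) (S.ξ₁ b), (S.γ c) 1 0 * t + (S.γ c) 1 1 ≠ 0 :=
    fun t ht => schottky_den_ne S c (fun h => hdisjb t ht (Ioo_subset_Icc_self h))
  have hstr : ∀ t ∈ Icc (S.ξ₀ b) (S.ξ₁ b), mobius (S.γ c) t ∈ Ioo (S.ξ₀ c) (S.ξ₁ c) :=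
    fun t ht => schottky_maps_strict S c (hdisjb t ht)
  have hbmem0 : S.ξ₀ b ∈ Icc (S.ξ₀ b) (S.ξ₁ b) := ⟨le_rfl, hkb⟩
  have hbmem1 : S.ξ₁ b ∈ Icc (S.ξ₀ b) (S.ξ₁ b) := ⟨hkb, le_rfl⟩
  set u := mobius (S.γ c) (S.ξ₀ b) with hu
  set v := mobius (S.γ c) (S.ξ₁ b) with hv
  have huI : u ∈ Ioo (S.ξ₀ c) (S.ξ₁ c) := hstr _ hbmem0
  have hvI : v ∈ Ioo (S.ξ₀ c) (S.ξ₁ c) := hstr _ hbmem1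
  have huv : u < v := mobius_lt (S.γ c) hkb hdenc hbmem0 hbmem1 (S.hlt b)
  have huIcc : u ∈ Icc (S.ξ₀ c) (S.ξ₁ c) := Ioo_subset_Icc_self huI
  have hvIcc : v ∈ Icc (S.ξ₀ c) (S.ξ₁ c) := Ioo_subset_Icc_self hvI
  -- the two word intervals
  have hIl : S.wordI (m ++ [c])
      = Icc (mobius (S.wordγ m) (S.ξ₀ c)) (mobius (S.wordγ m) (S.ξ₁ c)) := by
    simp only [SchottkyData.wordI]
    rw [dif_neg hl]
    have h1 : (m ++ [c]).getLast hl = c := by simp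
    have h2 : (m ++ [c]).dropLast = m := by simp
    rw [h1, h2, mobius_image_Icc _ hk.le hdenF]
  have hlb : m ++ [c] ++ [b] ≠ [] := by simp
  have hIlb : S.wordI (m ++ [c] ++ [b])
      = Icc (mobius (S.wordγ m) u) (mobius (S.wordγ m) v) := by
    simp only [SchottkyData.wordI]
    rw [dif_neg hlb]
    have h1 : (m ++ [c] ++ [b]).getLast hlb = b := by simp
    have h2 : (m ++ [c] ++ [b]).dropLast = m ++ [c] := by simp
    rw [h1, h2]
    have hwγ : S.wordγ (m ++ [c]) = S.wordγ m * S.γ c := by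
      simp [SchottkyData.wordγ]
    rw [hwγ]
    have himg : mobius (S.wordγ m * S.γ c) '' Icc (S.ξ₀ b) (S.ξ₁ b)
        = mobius (S.wordγ m) '' (mobius (S.γ c) '' Icc (S.ξ₀ b) (S.ξ₁ b)) := by
      rw [← Set.image_comp]
      exact Set.image_congr fun t ht => mobius_mul _ _ _ (hdenc t ht)
    rw [himg, mobius_image_Icc _ hkb hdenc, ← hu, ← hv,
      mobius_image_Icc _ huv.le
        (fun t ht => hdenF t (Icc_subset_Icc huIcc.1 hvIcc.2 ht))]
  -- monotonicity facts
  have hk0m : S.ξ₀ c ∈ Icc (S.ξ₀ c) (S.ξ₁ c) := ⟨le_rfl, hk.le⟩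
  have hk1m : S.ξ₁ c ∈ Icc (S.ξ₀ c) (S.ξ₁ c) := ⟨hk.le, le_rfl⟩
  have hUV : mobius (S.wordγ m) u < mobius (S.wordγ m) v :=
    mobius_lt _ hk.le hdenF huIcc hvIcc huv
  have hA0A1 : mobius (S.wordγ m) (S.ξ₀ c) < mobius (S.wordγ m) (S.ξ₁ c) :=
    mobius_lt _ hk.le hdenF hk0m hk1m hk
  have hivl : ivlen (S.wordI (m ++ [c]))
      = mobius (S.wordγ m) (S.ξ₁ c) - mobius (S.wordγ m) (S.ξ₀ c) := by
    rw [hIl, ivlen, Real.volume_Icc, ENNReal.toReal_ofReal (by linarith)]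
  have hivlb : ivlen (S.wordI (m ++ [c] ++ [b]))
      = mobius (S.wordγ m) v - mobius (S.wordγ m) u := by
    rw [hIlb, ivlen, Real.volume_Icc, ENNReal.toReal_ofReal (by linarith)]
  rw [hivl, hivlb]
  -- the constant for the pair (c, b)
  have hq : 0 < (v - u) * (S.ξ₁ c - S.ξ₀ c) := mul_pos (by linarith) (by linarith)
  have hs : 0 < (v - S.ξ₀ c) * (S.ξ₁ c - u) :=
    mul_pos (by linarith [hvI.1]) (by linarith [huI.2])
  have hQeq : Qf (c, b) = ((v - S.ξ₀ c) * (S.ξ₁ c - u)) / ((v - u) * (S.ξ₁ c - S.ξ₀ c)) := by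
    simp only [hQf, hu, hv]
  have hsq : (v - u) * (S.ξ₁ c - S.ξ₀ c) < (v - S.ξ₀ c) * (S.ξ₁ c - u) := by
    have hfac : (v - S.ξ₀ c) * (S.ξ₁ c - u) - (v - u) * (S.ξ₁ c - S.ξ₀ c)
        = (u - S.ξ₀ c) * (S.ξ₁ c - v) := by ring
    have hpos : 0 < (u - S.ξ₀ c) * (S.ξ₁ c - v) :=
      mul_pos (by linarith [huI.1]) (by linarith [hvI.2])
    linarith
  have hQ1 : 1 < Qf (c, b) := by
    rw [hQeq]
    exact (one_lt_div hq).mpr hsq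
  have hCQ : Qf (c, b) / (Qf (c, b) - 1) ≤ C :=
    le_trans (Finset.le_sup' (f := fun p => Qf p / (Qf p - 1)) (Finset.mem_univ (c, b)))
      (le_max_right _ _)
  have hQ0 : 0 < Qf (c, b) := by linarith
  have hmain : (Qf (c, b))⁻¹ ≤ 1 - C⁻¹ := by
    have hpos : 0 < Qf (c, b) / (Qf (c, b) - 1) := div_pos hQ0 (by linarith)
    have h1 : C⁻¹ ≤ (Qf (c, b) / (Qf (c, b) - 1))⁻¹ := inv_anti₀ hpos hCQ
    rw [inv_div] at h1
    have h2 : (Qf (c, b) - 1) / Qf (c, b) = 1 - (Qf (c, b))⁻¹ := by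
      field_simp
    rw [h2] at h1
    linarith
  have hfin := distortion_key (S.wordγ m) hdenF huI.1 huv hvI.2
  refine le_trans hfin ?_
  have hqs : ((v - u) * (S.ξ₁ c - S.ξ₀ c)) / ((v - S.ξ₀ c) * (S.ξ₁ c - u))
      = (Qf (c, b))⁻¹ := by
    rw [hQeq, inv_div]
  rw [hqs]
  exact mul_le_mul_of_nonneg_right hmain (by linarith)


end
end

section
/- There exists a constant C_Γ > 0, depending only on the Schottky data, such that for every word 𝐚 ∈ W and every letter b ∈ A with 𝐚 → b, the distortion factor of γ_𝐚 on the interval I_b satisfies |α(γ_𝐚, I_b)| ≤ C_Γ. -/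
open MeasureTheory Set Real Pointwise

noncomputable section

open MeasureTheory Set Real


namespace AlphaBoundAux
open Matrix OnePoint

/-- Lift a point of `ℝ ∪ {∞}` to a nonzero vector of `ℝ²`. -/
def lift (x : OnePoint ℝ) : Fin 2 → ℝ := Option.elim x ![1, 0] (fun y => ![y, 1])

/-- Project a vector of `ℝ²` to `ℝ ∪ {∞}`. -/
def proj (v : Fin 2 → ℝ) : OnePoint ℝ :=
  if v 1 = 0 then OnePoint.infty else ((v 0 / v 1 : ℝ) : OnePoint ℝ)

lemma lift_ne_zero (x : OnePoint ℝ) : lift x ≠ 0 := by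
  have H : ∀ y : Option ℝ, lift y ≠ 0 := by
    intro y
    cases y with
    | none => intro h; have := congrFun h 0; simp [lift] at this
    | some z => intro h; have := congrFun h 1; simp [lift] at this
  exact H x

lemma lift_infty' : lift (OnePoint.infty) = ![1, 0] := rfl

lemma lift_coe' (y : ℝ) : lift ((y : ℝ) : OnePoint ℝ) = ![y, 1] := rfl

lemma proj_smul {c : ℝ} (hc : c ≠ 0) (v : Fin 2 → ℝ) : proj (c • v) = proj v := by
  unfold proj
  simp only [Pi.smul_apply, smul_eq_mul, mul_eq_zero, hc, false_or]
  rw [mul_div_mul_left _ _ hc]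

lemma mobiusOP_eq (g : SL2) (x : OnePoint ℝ) :
    mobiusOP g x = proj ((g : Matrix (Fin 2) (Fin 2) ℝ) *ᵥ lift x) := by
  have H : ∀ y : Option ℝ, mobiusOP g y = proj ((g : Matrix (Fin 2) (Fin 2) ℝ) *ᵥ lift y) := by
    intro y
    cases y with
    | none =>
        simp [mobiusOP, lift, proj, Matrix.mulVec, dotProduct, Fin.sum_univ_two]
    | some z =>
        simp [mobiusOP, mobius, lift, proj, Matrix.mulVec, dotProduct, Fin.sum_univ_two]
  exact H x

lemma mulVec_ne_zero (h : SL2) {u : Fin 2 → ℝ} (hu : u ≠ 0) :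
    (h : Matrix (Fin 2) (Fin 2) ℝ) *ᵥ u ≠ 0 := by
  intro h0
  apply hu
  have h1 : ((h⁻¹ * h : SL2) : Matrix (Fin 2) (Fin 2) ℝ) *ᵥ u = 0 := by
    rw [Matrix.SpecialLinearGroup.coe_mul, ← Matrix.mulVec_mulVec, h0, Matrix.mulVec_zero]
  rw [inv_mul_cancel] at h1
  simpa using h1

lemma lift_proj {v : Fin 2 → ℝ} (hv : v ≠ 0) : ∃ c : ℝ, c ≠ 0 ∧ lift (proj v) = c • v := by
  by_cases h1 : v 1 = 0
  · have h0 : v 0 ≠ 0 := by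
      intro h0
      apply hv
      funext i
      fin_cases i <;> simp [h0, h1]
    refine ⟨(v 0)⁻¹, inv_ne_zero h0, ?_⟩
    unfold proj
    rw [if_pos h1, lift_infty']
    funext i
    fin_cases i <;> simp [h0, h1]
  · refine ⟨(v 1)⁻¹, inv_ne_zero h1, ?_⟩
    unfold proj
    rw [if_neg h1, lift_coe']
    funext i
    fin_cases i <;> simp [h1, div_eq_inv_mul]

lemma mobiusOP_mul (g h : SL2) (x : OnePoint ℝ) :
    mobiusOP (g * h) x = mobiusOP g (mobiusOP h x) := by
  rw [mobiusOP_eq, mobiusOP_eq, mobiusOP_eq]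
  obtain ⟨c, hc, hl⟩ := lift_proj (mulVec_ne_zero h (lift_ne_zero x))
  rw [hl, Matrix.mulVec_smul, proj_smul hc, Matrix.mulVec_mulVec,
    ← Matrix.SpecialLinearGroup.coe_mul]

lemma bar_bar {r : ℕ} (a : Fin (2 * r)) : bar (bar a) = a := by
  have ha := a.isLt
  by_cases h1 : (a : ℕ) < r
  · have h2 : bar a = ⟨(a : ℕ) + r, by omega⟩ := dif_pos h1
    rw [h2]
    have h3 : bar (⟨(a : ℕ) + r, by omega⟩ : Fin (2 * r)) = ⟨(a : ℕ) + r - r, by omega⟩ :=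
      dif_neg (show ¬((a : ℕ) + r < r) by omega)
    rw [h3]
    exact Fin.ext (by simp)
  · have h2 : bar a = ⟨(a : ℕ) - r, by omega⟩ := dif_neg h1
    rw [h2]
    have h3 : bar (⟨(a : ℕ) - r, by omega⟩ : Fin (2 * r)) = ⟨(a : ℕ) - r + r, by omega⟩ :=
      dif_pos (show (a : ℕ) - r < r by omega)
    rw [h3]
    exact Fin.ext (by simp; omega)

lemma wordγ_append {r : ℕ} (S : SchottkyData r) (l : List (Fin (2 * r))) (a : Fin (2 * r)) :
    S.wordγ (l ++ [a]) = S.wordγ l * S.γ a := by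
  simp [SchottkyData.wordγ]

lemma pole_mem {r : ℕ} (S : SchottkyData r) (l : List (Fin (2 * r))) :
    ∀ (hl : l ≠ []), S.IsWord l →
    mobiusOP (S.wordγ l)⁻¹ OnePoint.infty ∈
      (fun t : ℝ => (t : OnePoint ℝ)) ''
        Icc (S.ξ₀ (bar (l.getLast hl))) (S.ξ₁ (bar (l.getLast hl))) := by
  induction l using List.reverseRecOn with
  | nil => intro hl; exact absurd rfl hl
  | append_singleton l a ih =>
    intro hl hw
    have hgl : (l ++ [a]).getLast hl = a := List.getLast_append _
    rw [hgl, wordγ_append, _root_.mul_inv_rev, ← S.hinv a, mobiusOP_mul]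
    set p := mobiusOP (S.wordγ l)⁻¹ OnePoint.infty with hp
    have hmem : p ∈ univ \ ((fun t : ℝ => (t : OnePoint ℝ)) '' Ioo (S.ξ₀ a) (S.ξ₁ a)) := by
      rcases eq_or_ne l [] with h0 | h0
      · have hpinf : p = OnePoint.infty := by
          rw [hp, h0]
          have h1 : S.wordγ [] = 1 := by simp [SchottkyData.wordγ]
          rw [h1, inv_one]
          show (if ((1 : SL2) : Matrix (Fin 2) (Fin 2) ℝ) 1 0 = 0 then OnePoint.infty
            else _) = OnePoint.infty
          rw [if_pos]
          simp [Matrix.one_apply]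
        rw [hpinf]
        refine ⟨trivial, ?_⟩
        rintro ⟨t, -, ht⟩
        exact OnePoint.coe_ne_infty t ht
      · have hwl : S.IsWord l := (List.isChain_append.mp hw).1
        obtain ⟨q, hq, hqe⟩ := ih h0 hwl
        have hne : a ≠ bar (l.getLast h0) := by
          have h3 := (List.isChain_append.mp hw).2.2
          exact h3 _ (Option.mem_def.mpr (List.getLast?_eq_getLast h0)) a rfl
        refine ⟨trivial, ?_⟩
        rintro ⟨t, ht, hte⟩
        rw [← hqe] at hte
        have htq : t = q := OnePoint.coe_eq_coe.mp hte
        subst htq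
        have hdisj := S.hdisj (bar (l.getLast h0)) a (fun hh => hne hh.symm)
        exact Set.disjoint_left.mp hdisj hq (Ioo_subset_Icc_self ht)
    have hmap := S.hmap (bar a)
    rw [bar_bar] at hmap
    rw [← hmap]
    exact ⟨p, hmem, rfl⟩

end AlphaBoundAux

open AlphaBoundAux in
/-- **Uniform bound on distortion factors:** there is `C_Γ > 0` depending only on the
Schottky data such that `|α(γ_𝐚, I_b)| ≤ C_Γ` for all words `𝐚` and letters `b` with
`𝐚 → b`. -/
theorem alpha_bound (r : ℕ) (S : SchottkyData r) :
    ∃ C > (0 : ℝ), ∀ (l : List (Fin (2 * r))) (b : Fin (2 * r)),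
      S.IsWord (l ++ [b]) →
      |alphaDist (S.wordγ l) (S.ξ₀ b) (S.ξ₁ b)| ≤ C := by
  classical
  have hrr := S.hr
  have hr : 0 < 2 * r := by omega
  have hne : (Finset.univ : Finset (Fin (2 * r))).Nonempty := ⟨⟨0, hr⟩, Finset.mem_univ _⟩
  set m := Finset.univ.inf' hne S.ξ₀ with hm
  set M := Finset.univ.sup' hne S.ξ₁ with hM
  have hmle : ∀ a, m ≤ S.ξ₀ a := fun a => Finset.inf'_le _ (Finset.mem_univ a)
  have hMle : ∀ a, S.ξ₁ a ≤ M := fun a => Finset.le_sup' _ (Finset.mem_univ a)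
  have horder : ∀ a b : Fin (2 * r), a ≠ b → S.ξ₁ a < S.ξ₀ b ∨ S.ξ₁ b < S.ξ₀ a := by
    intro a b hab
    by_contra hc
    push_neg at hc
    refine Set.disjoint_left.mp (S.hdisj a b hab)
      (⟨le_max_left _ _, max_le (S.hlt a).le hc.1⟩ :
        max (S.ξ₀ a) (S.ξ₀ b) ∈ Icc (S.ξ₀ a) (S.ξ₁ a))
      ⟨le_max_right _ _, max_le hc.2 (S.hlt b).le⟩
  have hpne : ((Finset.univ : Finset (Fin (2 * r) × Fin (2 * r))).filter
      fun p => p.1 ≠ p.2).Nonempty := by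
    refine ⟨(⟨0, hr⟩, ⟨1, by omega⟩), ?_⟩
    simp only [Finset.mem_filter, Finset.mem_univ, true_and]
    intro h
    rw [Fin.mk.injEq] at h
    exact absurd h (by omega)
  set ε := ((Finset.univ : Finset (Fin (2 * r) × Fin (2 * r))).filter
      fun p => p.1 ≠ p.2).inf' hpne
      (fun p => max (S.ξ₀ p.1 - S.ξ₁ p.2) (S.ξ₀ p.2 - S.ξ₁ p.1)) with hεdef
  have hgap : ∀ a b : Fin (2 * r), a ≠ b →
      0 < max (S.ξ₀ a - S.ξ₁ b) (S.ξ₀ b - S.ξ₁ a) := by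
    intro a b hab
    rcases horder a b hab with h | h
    · exact lt_max_of_lt_right (sub_pos.mpr h)
    · exact lt_max_of_lt_left (sub_pos.mpr h)
  have hε0 : 0 < ε := by
    rw [hεdef]
    rw [Finset.lt_inf'_iff]
    intro p hp
    simp only [Finset.mem_filter, Finset.mem_univ, true_and] at hp
    exact hgap p.1 p.2 hp
  have hεle : ∀ a b : Fin (2 * r), a ≠ b →
      ε ≤ max (S.ξ₀ a - S.ξ₁ b) (S.ξ₀ b - S.ξ₁ a) := by
    intro a b hab
    have hmem : (a, b) ∈ (Finset.univ : Finset (Fin (2 * r) × Fin (2 * r))).filter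
        (fun p => p.1 ≠ p.2) := by
      simp only [Finset.mem_filter, Finset.mem_univ, true_and]
      exact hab
    rw [hεdef]
    exact Finset.inf'_le (fun p => max (S.ξ₀ p.1 - S.ξ₁ p.2) (S.ξ₀ p.2 - S.ξ₁ p.1)) hmem
  have key : ∀ x y : ℝ, ε ≤ x → ε ≤ y → x ≤ M - m → y ≤ M - m →
      |Real.log (x / y)| ≤ max (Real.log (M - m) - Real.log ε) 1 := by
    intro x y hx hy hxD hyD
    have hx0 : 0 < x := lt_of_lt_of_le hε0 hx
    have hy0 : 0 < y := lt_of_lt_of_le hε0 hy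
    rw [Real.log_div hx0.ne' hy0.ne']
    refine le_max_of_le_left (abs_sub_le_iff.mpr ⟨?_, ?_⟩)
    · exact sub_le_sub (Real.log_le_log hx0 hxD) (Real.log_le_log hε0 hy)
    · exact sub_le_sub (Real.log_le_log hy0 hyD) (Real.log_le_log hε0 hx)
  refine ⟨max (Real.log (M - m) - Real.log ε) 1,
    lt_of_lt_of_le one_pos (le_max_right _ _), ?_⟩
  intro l b hw
  rcases eq_or_ne l [] with rfl | hl
  · have h1 : S.wordγ [] = 1 := by simp [SchottkyData.wordγ]
    rw [h1]
    have h2 : alphaDist (1 : SL2) (S.ξ₀ b) (S.ξ₁ b) = 0 := by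
      rw [alphaDist, if_pos]
      rfl
    rw [h2]
    simp only [abs_zero]
    exact le_trans zero_le_one (le_max_right _ _)
  · obtain ⟨q, hq, hqe⟩ := pole_mem S l hl ((List.isChain_append.mp hw).1)
    set g := S.wordγ l with hg
    set a' := bar (l.getLast hl) with ha'
    have hab : a' ≠ b := by
      have h3 := (List.isChain_append.mp hw).2.2
      exact (h3 _ (Option.mem_def.mpr (List.getLast?_eq_getLast hl)) b rfl).symm
    have hginv10 : ((g⁻¹ : SL2) : Matrix (Fin 2) (Fin 2) ℝ) 1 0
        = -((g : Matrix (Fin 2) (Fin 2) ℝ) 1 0) := by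
      rw [Matrix.SpecialLinearGroup.coe_inv, Matrix.adjugate_fin_two]
      simp
    have hginv00 : ((g⁻¹ : SL2) : Matrix (Fin 2) (Fin 2) ℝ) 0 0
        = (g : Matrix (Fin 2) (Fin 2) ℝ) 1 1 := by
      rw [Matrix.SpecialLinearGroup.coe_inv, Matrix.adjugate_fin_two]
      simp
    have hform : mobiusOP g⁻¹ OnePoint.infty
        = if ((g⁻¹ : SL2) : Matrix (Fin 2) (Fin 2) ℝ) 1 0 = 0 then OnePoint.infty
          else ((((g⁻¹ : SL2) : Matrix (Fin 2) (Fin 2) ℝ) 0 0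
            / ((g⁻¹ : SL2) : Matrix (Fin 2) (Fin 2) ℝ) 1 0 : ℝ) : OnePoint ℝ) := rfl
    have hg10 : (g : Matrix (Fin 2) (Fin 2) ℝ) 1 0 ≠ 0 := by
      intro h0
      rw [hform, hginv10, h0, neg_zero, if_pos rfl] at hqe
      exact OnePoint.coe_ne_infty q hqe
    have hg10' : ((g⁻¹ : SL2) : Matrix (Fin 2) (Fin 2) ℝ) 1 0 ≠ 0 := by
      rw [hginv10]; exact neg_ne_zero.mpr hg10
    have hpole : mobiusPole g = q := by
      rw [hform, if_neg hg10', hginv10, hginv00] at hqe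
      have h4 := OnePoint.coe_eq_coe.mp hqe
      rw [mobiusPole, h4, div_neg, neg_div]
    have hgoal : alphaDist g (S.ξ₀ b) (S.ξ₁ b)
        = Real.log ((q - S.ξ₁ b) / (q - S.ξ₀ b)) := by
      rw [alphaDist, if_neg hg10, hpole]
    rw [hgoal]
    have hqm : m ≤ q := le_trans (hmle a') hq.1
    have hqM : q ≤ M := le_trans hq.2 (hMle a')
    rcases horder a' b hab with hcase | hcase
    · -- q below the interval of b
      have h1 : q < S.ξ₀ b := lt_of_le_of_lt hq.2 hcase
      have hrw : (q - S.ξ₁ b) / (q - S.ξ₀ b) = (S.ξ₁ b - q) / (S.ξ₀ b - q) := by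
        rw [← neg_sub (S.ξ₁ b) q, ← neg_sub (S.ξ₀ b) q, neg_div_neg_eq]
      rw [hrw]
      have hεy : ε ≤ S.ξ₀ b - q := by
        refine le_trans (hεle a' b hab) (max_le ?_ ?_)
        · have : S.ξ₀ a' - S.ξ₁ b ≤ 0 := by
            have := S.hlt a'
            have := (S.hlt b).le
            linarith
          linarith
        · linarith [hq.2]
      have hεx : ε ≤ S.ξ₁ b - q := le_trans hεy (by linarith [(S.hlt b).le])
      exact key _ _ hεx hεy (by linarith [hMle b]) (by linarith [hMle b, (S.hlt b).le])
    · -- q above the interval of b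
      have h1 : S.ξ₁ b < q := lt_of_lt_of_le hcase hq.1
      have hεx : ε ≤ q - S.ξ₁ b := by
        refine le_trans (hεle a' b hab) (max_le ?_ ?_)
        · linarith [hq.1]
        · have : S.ξ₀ b - S.ξ₁ a' ≤ 0 := by
            have := S.hlt a'
            have := (S.hlt b).le
            linarith
          linarith
      have hεy : ε ≤ q - S.ξ₀ b := le_trans hεx (by linarith [(S.hlt b).le])
      exact key _ _ hεx hεy (by linarith [hmle b, (S.hlt b).le]) (by linarith [hmle b])


end
end
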